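/- arXiv:0910.0156 — 4 statements merged into one kernel-verified Lean document; each statement's English description precedes it below -/
import Mathlib

section
/- Let (Tᵢ)_{i≥1} be the jump times of a Poisson process with rate α and, independently, (Δᵢ)_{i≥1} i.i.d. with law σ on ℝ^d without atom at 0. Let h : ℝ₊ × ℝ^d → ℝ be measurable such that the shot noise series I = Σ_{i≥1} h(Tᵢ, Δᵢ) converges a.s. If the restriction of the pushforward measure (λ_{ℝ₊} ⊗ σ) h^{−1} to ℝ∖{0} is absolutely continuous with respect to Lebesgue measure, then the restriction of the law of I to ℝ∖{0} is absolutely continuous with respect to Lebesgue measure (the law may have an atom at 0). -/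
open MeasureTheory ProbabilityTheory Filter
open scoped ENNReal

/-- Jump times of a Poisson process: partial sums of the interarrival times `E`. -/
noncomputable def jumpTime {Ω : Type*} (E : ℕ → Ω → ℝ) (i : ℕ) (ω : Ω) : ℝ :=
  ∑ j ∈ Finset.range i, E j ω

noncomputable def limsupReal (f : ℕ → ℝ) : ℝ :=
  (Filter.limsup (fun n => ((f n : ℝ) : EReal)) Filter.atTop).toReal

lemma limsupReal_eq_of_tendsto {f : ℕ → ℝ} {l : ℝ} (hf : Tendsto f atTop (nhds l)) :
    limsupReal f = l := by
  have h2 : Tendsto (fun n => ((f n : ℝ) : EReal)) atTop (nhds (l : EReal)) :=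
    (continuous_coe_real_ereal.tendsto l).comp hf
  rw [limsupReal, h2.limsup_eq, EReal.toReal_coe]

lemma measurable_limsupReal {β : Type*} [MeasurableSpace β] {f : ℕ → β → ℝ}
    (hf : ∀ n, Measurable (f n)) :
    Measurable (fun y => limsupReal (fun n => f n y)) :=
  measurable_ereal_toReal.comp (Measurable.limsup fun n => measurable_coe_real_ereal.comp (hf n))

section Aux
variable {d : ℕ} (σ : Measure (Fin d → ℝ)) [IsProbabilityMeasure σ]
variable (h : ℝ → (Fin d → ℝ) → ℝ)

lemma expMeasure_le (α : ℝ) (hα : 0 < α) :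
    expMeasure α ≤ (ENNReal.ofReal α) • (volume.restrict (Set.Ioi (0 : ℝ))) := by
  have hd : expMeasure α = volume.withDensity (exponentialPDF α) := rfl
  refine Measure.le_iff.mpr fun t ht => ?_
  rw [hd, withDensity_apply _ ht]
  have hb : ∀ᵐ x ∂(volume.restrict t), exponentialPDF α x ≤
      (Set.Ioi (0:ℝ)).indicator (fun _ => ENNReal.ofReal α) x := by
    refine ae_mono Measure.restrict_le_self ?_
    have h0 : ∀ᵐ x : ℝ, x ≠ 0 := by
      rw [ae_iff]; simpa using Real.volume_singleton (a := 0)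
    filter_upwards [h0] with x hx
    rcases lt_trichotomy x 0 with hlt | heq | hgt
    · rw [exponentialPDF_of_neg hlt]; exact zero_le
    · exact absurd heq hx
    · rw [exponentialPDF_of_nonneg hgt.le,
        Set.indicator_of_mem (Set.mem_Ioi.mpr hgt)]
      refine ENNReal.ofReal_le_ofReal ?_
      nlinarith [Real.exp_le_one_iff.mpr (by nlinarith : -(α * x) ≤ 0), Real.exp_pos (-(α * x))]
  calc ∫⁻ x in t, exponentialPDF α x
      ≤ ∫⁻ x in t, (Set.Ioi (0:ℝ)).indicator (fun _ => ENNReal.ofReal α) x :=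
        lintegral_mono_ae hb
    _ = ((ENNReal.ofReal α) • (volume.restrict (Set.Ioi (0 : ℝ)))) t := by
        rw [lintegral_indicator measurableSet_Ioi, setLIntegral_const]
        simp [Measure.restrict_restrict measurableSet_Ioi, Measure.restrict_apply ht,
          Set.inter_comm, mul_comm]
end Aux

section Key
variable {d : ℕ} {σ : Measure (Fin d → ℝ)} [IsProbabilityMeasure σ]
variable {h : ℝ → (Fin d → ℝ) → ℝ} (hh : Measurable (fun p : ℝ × (Fin d → ℝ) => h p.1 p.2))
variable (hac : ((((volume.restrict (Set.Ioi (0 : ℝ))).prod σ).map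
          (fun q : ℝ × (Fin d → ℝ) => h q.1 q.2)).restrict ({0}ᶜ : Set ℝ))
        ≪ (volume : Measure ℝ))

include hh hac in
lemma shift_null {s : ℝ} (hs : 0 ≤ s) {D : Set ℝ} (hD : MeasurableSet D)
    (hD0 : volume D = 0) (hDz : D ⊆ ({0}ᶜ : Set ℝ)) :
    ((volume.restrict (Set.Ioi (0 : ℝ))).prod σ) {a : ℝ × (Fin d → ℝ) | h (s + a.1) a.2 ∈ D}
      = 0 := by
  have hmem : MeasurableSet {a : ℝ × (Fin d → ℝ) | h (s + a.1) a.2 ∈ D} := by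
    exact (hh.comp ((measurable_const.add measurable_fst).prodMk measurable_snd)) hD
  set q : ℝ → ℝ≥0∞ := fun t => σ {x | h t x ∈ D} with hq
  have h1 : ((volume.restrict (Set.Ioi (0 : ℝ))).prod σ)
      {a : ℝ × (Fin d → ℝ) | h (s + a.1) a.2 ∈ D} = ∫⁻ t in Set.Ioi (0:ℝ), q (s + t) := by
    rw [Measure.prod_apply hmem]; rfl
  have h2 : ∫⁻ t in Set.Ioi (0:ℝ), q (s + t)
      = ∫⁻ t, (Set.Ioi (0:ℝ)).indicator (fun t => q (s + t)) t := by
    rw [lintegral_indicator measurableSet_Ioi]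
  have h3 : ∀ t : ℝ, (Set.Ioi (0:ℝ)).indicator (fun t => q (s + t)) t
      = (Set.Ioi s).indicator q (s + t) := by
    intro t
    simp only [Set.indicator_apply, Set.mem_Ioi, lt_add_iff_pos_right]
  have h4 : ∫⁻ t, (Set.Ioi s).indicator q (s + t) = ∫⁻ t, (Set.Ioi s).indicator q t :=
    lintegral_add_left_eq_self ((Set.Ioi s).indicator q) s
  have h5 : ∫⁻ t, (Set.Ioi s).indicator q t = ∫⁻ t in Set.Ioi s, q t :=
    lintegral_indicator measurableSet_Ioi q
  have h6 : ∫⁻ t in Set.Ioi s, q t ≤ ∫⁻ t in Set.Ioi (0:ℝ), q t :=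
    lintegral_mono' (Measure.restrict_mono (Set.Ioi_subset_Ioi hs) le_rfl) le_rfl
  have hmem0 : MeasurableSet {a : ℝ × (Fin d → ℝ) | h a.1 a.2 ∈ D} := hh hD
  have h7 : ∫⁻ t in Set.Ioi (0:ℝ), q t
      = ((volume.restrict (Set.Ioi (0 : ℝ))).prod σ) {a : ℝ × (Fin d → ℝ) | h a.1 a.2 ∈ D} := by
    rw [Measure.prod_apply hmem0]; rfl
  have h8 : ((volume.restrict (Set.Ioi (0 : ℝ))).prod σ)
      {a : ℝ × (Fin d → ℝ) | h a.1 a.2 ∈ D} = 0 := by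
    have hm : ((volume.restrict (Set.Ioi (0 : ℝ))).prod σ) {a : ℝ × (Fin d → ℝ) | h a.1 a.2 ∈ D}
        = (((volume.restrict (Set.Ioi (0 : ℝ))).prod σ).map
            (fun q : ℝ × (Fin d → ℝ) => h q.1 q.2)) D := by
      rw [Measure.map_apply hh hD]; rfl
    rw [hm]
    have : ((((volume.restrict (Set.Ioi (0 : ℝ))).prod σ).map
        (fun q : ℝ × (Fin d → ℝ) => h q.1 q.2)).restrict ({0}ᶜ : Set ℝ)) D
        = (((volume.restrict (Set.Ioi (0 : ℝ))).prod σ).map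
            (fun q : ℝ × (Fin d → ℝ) => h q.1 q.2)) D := by
      rw [Measure.restrict_apply hD, Set.inter_eq_self_of_subset_left hDz]
    rw [← this]
    exact hac hD0
  rw [h1, h2, lintegral_congr h3, h4, h5]
  exact le_antisymm (h6.trans_eq (h7.trans h8)) zero_le
end Key

section Key2
variable {d : ℕ} {σ : Measure (Fin d → ℝ)} [IsProbabilityMeasure σ]
variable {h : ℝ → (Fin d → ℝ) → ℝ} (hh : Measurable (fun p : ℝ × (Fin d → ℝ) => h p.1 p.2))
variable (hac : ((((volume.restrict (Set.Ioi (0 : ℝ))).prod σ).map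
          (fun q : ℝ × (Fin d → ℝ) => h q.1 q.2)).restrict ({0}ᶜ : Set ℝ))
        ≪ (volume : Measure ℝ))

include hh hac in
lemma key_null {α : ℝ} (hα : 0 < α) {A : Set ℝ} (hA : MeasurableSet A) (hA0 : volume A = 0)
    {s : ℝ} (C : ℝ) (hs : 0 ≤ s) {T : ℝ → (Fin d → ℝ) → ℝ}
    (hT : Measurable (fun p : ℝ × (Fin d → ℝ) => T p.1 p.2)) :
    (((expMeasure α).prod σ).prod ((expMeasure α).prod σ))
      {p : (ℝ × (Fin d → ℝ)) × (ℝ × (Fin d → ℝ)) |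
        h (s + p.1.1) p.1.2 ≠ 0 ∧ C + h (s + p.1.1) p.1.2 + T (p.1.1 + p.2.1) p.2.2 ∈ A}
      = 0 := by
  haveI : IsProbabilityMeasure (expMeasure α) := isProbabilityMeasure_expMeasure hα
  set c : ℝ≥0∞ := ENNReal.ofReal α with hc
  set ξ : Measure (ℝ × (Fin d → ℝ)) := (volume.restrict (Set.Ioi (0 : ℝ))).prod σ with hξ
  -- basic measurable functions
  have mh1 : Measurable (fun a : ℝ × (Fin d → ℝ) => h (s + a.1) a.2) :=
    hh.comp ((measurable_const.add measurable_fst).prodMk measurable_snd)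
  -- the bad set and its measurability
  set Bad : Set ((ℝ × (Fin d → ℝ)) × (ℝ × (Fin d → ℝ))) :=
    {p | h (s + p.1.1) p.1.2 ≠ 0 ∧ C + h (s + p.1.1) p.1.2 + T (p.1.1 + p.2.1) p.2.2 ∈ A}
      with hBad
  have mT2 : Measurable (fun p : (ℝ × (Fin d → ℝ)) × (ℝ × (Fin d → ℝ)) =>
      T (p.1.1 + p.2.1) p.2.2) :=
    hT.comp (((measurable_fst.fst).add (measurable_snd.fst)).prodMk (measurable_snd.snd))
  have mh2 : Measurable (fun p : (ℝ × (Fin d → ℝ)) × (ℝ × (Fin d → ℝ)) =>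
      h (s + p.1.1) p.1.2) := mh1.comp measurable_fst
  have mBad : MeasurableSet Bad := by
    refine ((mh2 (measurableSet_singleton 0).compl).inter ?_)
    exact ((measurable_const.add mh2).add mT2) hA
  -- the set with (u, x') free
  set Bad' : Set ((ℝ × (Fin d → ℝ)) × (ℝ × (Fin d → ℝ))) :=
    {p | h (s + p.1.1) p.1.2 ≠ 0 ∧ C + h (s + p.1.1) p.1.2 + T p.2.1 p.2.2 ∈ A} with hBad'
  have mT2' : Measurable (fun p : (ℝ × (Fin d → ℝ)) × (ℝ × (Fin d → ℝ)) => T p.2.1 p.2.2) :=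
    hT.comp ((measurable_snd.fst).prodMk (measurable_snd.snd))
  have mBad' : MeasurableSet Bad' :=
    (mh2 (measurableSet_singleton 0).compl).inter (((measurable_const.add mh2).add mT2') hA)
  -- step 1 : fixed `a`, integrate over `b`
  have step1 : ∀ a : ℝ × (Fin d → ℝ),
      ((expMeasure α).prod σ) {b | (a, b) ∈ Bad} ≤
        c * ((volume.prod σ) {b | (a, b) ∈ Bad'}) := by
    intro a
    have e1 : ((expMeasure α).prod σ) {b | (a, b) ∈ Bad}
        = ∫⁻ f, σ {x' | (a, (f, x')) ∈ Bad} ∂(expMeasure α) := by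
      rw [Measure.prod_apply]
      · rfl
      · exact measurable_prodMk_left mBad
    have e2 : ∫⁻ f, σ {x' | (a, (f, x')) ∈ Bad} ∂(expMeasure α)
        ≤ ∫⁻ f, σ {x' | (a, (f, x')) ∈ Bad} ∂(c • volume.restrict (Set.Ioi (0:ℝ))) :=
      lintegral_mono' (expMeasure_le α hα) le_rfl
    have e3 : ∫⁻ f, σ {x' | (a, (f, x')) ∈ Bad} ∂(c • volume.restrict (Set.Ioi (0:ℝ)))
        = c * ∫⁻ f, σ {x' | (a, (f, x')) ∈ Bad} ∂(volume.restrict (Set.Ioi (0:ℝ))) :=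
      lintegral_smul_measure c _
    have e4 : ∫⁻ f, σ {x' | (a, (f, x')) ∈ Bad} ∂(volume.restrict (Set.Ioi (0:ℝ)))
        ≤ ∫⁻ f, σ {x' | (a, (f, x')) ∈ Bad} ∂(volume : Measure ℝ) :=
      lintegral_mono' Measure.restrict_le_self le_rfl
    have e5 : ∀ f : ℝ, σ {x' | (a, (f, x')) ∈ Bad}
        = (fun u => σ {x' | (a, (u, x')) ∈ Bad'}) (a.1 + f) := by
      intro f; rfl
    have e6 : ∫⁻ f, σ {x' | (a, (f, x')) ∈ Bad} ∂(volume : Measure ℝ)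
        = ∫⁻ u, σ {x' | (a, (u, x')) ∈ Bad'} ∂(volume : Measure ℝ) := by
      rw [lintegral_congr e5]
      exact lintegral_add_left_eq_self (fun u => σ {x' | (a, (u, x')) ∈ Bad'}) a.1
    have e7 : ∫⁻ u, σ {x' | (a, (u, x')) ∈ Bad'} ∂(volume : Measure ℝ)
        = (volume.prod σ) {b | (a, b) ∈ Bad'} := by
      rw [Measure.prod_apply]
      · rfl
      · exact measurable_prodMk_left mBad'
    calc ((expMeasure α).prod σ) {b | (a, b) ∈ Bad}
        ≤ c * ∫⁻ f, σ {x' | (a, (f, x')) ∈ Bad} ∂(volume.restrict (Set.Ioi (0:ℝ))) :=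
          e1 ▸ (e2.trans_eq e3)
      _ ≤ c * ((volume.prod σ) {b | (a, b) ∈ Bad'}) := by
          exact mul_le_mul_right (e4.trans_eq (e6.trans e7)) c
  -- assemble
  set G : ℝ × (Fin d → ℝ) → ℝ≥0∞ := fun a => (volume.prod σ) {b | (a, b) ∈ Bad'} with hG
  have mG : Measurable G := measurable_measure_prodMk_left mBad'
  have s2 : (((expMeasure α).prod σ).prod ((expMeasure α).prod σ)) Bad
      ≤ c * ∫⁻ a, G a ∂((expMeasure α).prod σ) := by
    have e1 : (((expMeasure α).prod σ).prod ((expMeasure α).prod σ)) Bad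
        = ∫⁻ a, ((expMeasure α).prod σ) {b | (a, b) ∈ Bad} ∂((expMeasure α).prod σ) := by
      rw [Measure.prod_apply mBad]; rfl
    calc (((expMeasure α).prod σ).prod ((expMeasure α).prod σ)) Bad
        = ∫⁻ a, ((expMeasure α).prod σ) {b | (a, b) ∈ Bad} ∂((expMeasure α).prod σ) := e1
      _ ≤ ∫⁻ a, c * G a ∂((expMeasure α).prod σ) := lintegral_mono step1
      _ = c * ∫⁻ a, G a ∂((expMeasure α).prod σ) := lintegral_const_mul c mG
  have s3 : ∫⁻ a, G a ∂((expMeasure α).prod σ) ≤ c * ∫⁻ a, G a ∂ξ := by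
    calc ∫⁻ a, G a ∂((expMeasure α).prod σ)
        = ∫⁻ e, ∫⁻ x, G (e, x) ∂σ ∂(expMeasure α) := lintegral_prod G mG.aemeasurable
      _ ≤ ∫⁻ e, ∫⁻ x, G (e, x) ∂σ ∂(c • volume.restrict (Set.Ioi (0:ℝ))) :=
          lintegral_mono' (expMeasure_le α hα) le_rfl
      _ = c * ∫⁻ e, ∫⁻ x, G (e, x) ∂σ ∂(volume.restrict (Set.Ioi (0:ℝ))) :=
          lintegral_smul_measure c _
      _ = c * ∫⁻ a, G a ∂ξ := by rw [hξ, lintegral_prod G mG.aemeasurable]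
  have s4 : ∫⁻ a, G a ∂ξ = 0 := by
    have e1 : ∫⁻ a, G a ∂ξ = (ξ.prod (volume.prod σ)) Bad' := by
      rw [Measure.prod_apply mBad']; rfl
    have e2 : (ξ.prod (volume.prod σ)) Bad'
        = ∫⁻ b, ξ {a | (a, b) ∈ Bad'} ∂(volume.prod σ) := by
      rw [Measure.prod_apply_symm mBad']; rfl
    have e3 : ∀ b : ℝ × (Fin d → ℝ), ξ {a | (a, b) ∈ Bad'} = 0 := by
      intro b
      set D : Set ℝ := {v | v ≠ 0 ∧ C + v + T b.1 b.2 ∈ A} with hD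
      have hDm : MeasurableSet D := by
        have hm : Measurable fun v : ℝ => C + v + T b.1 b.2 := by fun_prop
        exact ((measurableSet_singleton (0:ℝ)).compl).inter (hm hA)
      have hD0 : volume D = 0 := by
        have hpre : volume ((fun v : ℝ => (C + T b.1 b.2) + v) ⁻¹' A) = 0 := by
          rw [measure_preimage_add]; exact hA0
        refine measure_mono_null (fun v hv => ?_) hpre
        simp only [Set.mem_preimage]
        have h2 := hv.2
        rwa [show C + T b.1 b.2 + v = C + v + T b.1 b.2 from by ring]
      have hDz : D ⊆ ({0}ᶜ : Set ℝ) := fun v hv => hv.1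
      have : ξ {a | (a, b) ∈ Bad'} = ξ {a : ℝ × (Fin d → ℝ) | h (s + a.1) a.2 ∈ D} := rfl
      rw [this]
      exact shift_null hh hac hs hDm hD0 hDz
    rw [e1, e2, lintegral_congr e3, lintegral_zero]
  refine le_antisymm ?_ zero_le
  calc (((expMeasure α).prod σ).prod ((expMeasure α).prod σ)) Bad
      ≤ c * ∫⁻ a, G a ∂((expMeasure α).prod σ) := s2
    _ ≤ c * (c * ∫⁻ a, G a ∂ξ) := mul_le_mul_right s3 c
    _ = 0 := by rw [s4, mul_zero, mul_zero]
end Key2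

section Seq
variable {d : ℕ} (h : ℝ → (Fin d → ℝ) → ℝ)

noncomputable def psum (n : ℕ) (y : ℕ → ℝ × (Fin d → ℝ)) : ℝ :=
  ∑ i ∈ Finset.range n, h (∑ k ∈ Finset.range (i+1), (y k).1) ((y i).2)

noncomputable def Phi (y : ℕ → ℝ × (Fin d → ℝ)) : ℝ := limsupReal (fun n => psum h n y)

def recon (j : ℕ) (z : ℕ → ℝ × (Fin d → ℝ)) (a b : ℝ × (Fin d → ℝ)) :
    ℕ → ℝ × (Fin d → ℝ) :=
  fun k => if k = j then a else if k = j+1 then b else z k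

noncomputable def tailSum (j : ℕ) (z : ℕ → ℝ × (Fin d → ℝ)) (n : ℕ) (u : ℝ)
    (x' : Fin d → ℝ) : ℝ :=
  ∑ i ∈ Finset.range n,
    if i = 0 then h ((∑ k ∈ Finset.range j, (z k).1) + u) x'
    else h ((∑ k ∈ Finset.range j, (z k).1) + u + ∑ k ∈ Finset.Icc (j+2) (j+1+i), (z k).1)
          ((z (j+1+i)).2)

variable {h}
variable (hh : Measurable (fun p : ℝ × (Fin d → ℝ) => h p.1 p.2))

include hh in
lemma measurable_psum (n : ℕ) : Measurable (fun y => psum h n y) := by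
  refine Finset.measurable_sum _ (fun i _ => ?_)
  have hm : Measurable fun y : ℕ → ℝ × (Fin d → ℝ) =>
      ((∑ k ∈ Finset.range (i+1), (y k).1, (y i).2) : ℝ × (Fin d → ℝ)) := by
    refine Measurable.prodMk ?_ (measurable_pi_apply i).snd
    exact Finset.measurable_sum (Finset.range (i+1)) (fun k _ => (measurable_pi_apply k).fst)
  exact hh.comp hm

include hh in
lemma measurable_Phi : Measurable (fun y => Phi h y) :=
  measurable_limsupReal (fun n => measurable_psum hh n)

lemma measurable_recon (j : ℕ) :
    Measurable (fun q : (ℕ → ℝ × (Fin d → ℝ)) × ((ℝ × (Fin d → ℝ)) × (ℝ × (Fin d → ℝ))) =>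
      recon j q.1 q.2.1 q.2.2) := by
  refine measurable_pi_lambda _ (fun k => ?_)
  unfold recon
  by_cases h1 : k = j
  · simpa [h1] using measurable_snd.fst
  by_cases h2 : k = j + 1
  · simpa [h1, h2] using measurable_snd.snd
  · simpa [h1, h2] using (measurable_fst.comp measurable_id).eval

include hh in
lemma measurable_tailSum (j : ℕ) (z : ℕ → ℝ × (Fin d → ℝ)) (n : ℕ) :
    Measurable (fun p : ℝ × (Fin d → ℝ) => tailSum h j z n p.1 p.2) := by
  refine Finset.measurable_sum _ (fun i _ => ?_)
  by_cases hi : i = 0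
  · simpa [hi, Function.comp_def] using hh.comp ((measurable_const.add measurable_fst).prodMk measurable_snd)
  · simp only [hi, if_false]
    exact hh.comp (((measurable_const.add measurable_fst).add
      measurable_const).prodMk measurable_const)

lemma psum_succ (m : ℕ) (y : ℕ → ℝ × (Fin d → ℝ)) :
    psum h (m+1) y = psum h m y + h (∑ k ∈ Finset.range (m+1), (y k).1) ((y m).2) :=
  Finset.sum_range_succ _ m

lemma recon_of_ne {j k : ℕ} (z : ℕ → ℝ × (Fin d → ℝ)) (a b : ℝ × (Fin d → ℝ))
    (h1 : k ≠ j) (h2 : k ≠ j+1) : recon j z a b k = z k := by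
  simp [recon, h1, h2]

lemma psum_recon (j : ℕ) (z : ℕ → ℝ × (Fin d → ℝ)) (a b : ℝ × (Fin d → ℝ)) (n : ℕ) :
    psum h (n + (j+1)) (recon j z a b)
      = (∑ i ∈ Finset.range j, h (∑ k ∈ Finset.range (i+1), (z k).1) ((z i).2))
        + h ((∑ k ∈ Finset.range j, (z k).1) + a.1) a.2
        + tailSum h j z n (a.1 + b.1) b.2 := by
  set y := recon j z a b with hy
  set s := ∑ k ∈ Finset.range j, (z k).1 with hs
  have f2 : ∀ m, m ≤ j → ∑ k ∈ Finset.range m, (y k).1 = ∑ k ∈ Finset.range m, (z k).1 := by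
    intro m hm
    refine Finset.sum_congr rfl (fun k hk => ?_)
    have hk' := Finset.mem_range.mp hk
    rw [hy, recon_of_ne z a b (by omega) (by omega)]
  have f3 : ∑ k ∈ Finset.range (j+1), (y k).1 = s + a.1 := by
    rw [Finset.sum_range_succ, f2 j le_rfl, hy]
    simp [recon, hs]
  have f4 : ∑ k ∈ Finset.range (j+2), (y k).1 = s + a.1 + b.1 := by
    rw [Finset.sum_range_succ, f3, hy]
    simp [recon]
  have f5 : ∀ i, j+2 ≤ i → ∑ k ∈ Finset.range (i+1), (y k).1
      = s + a.1 + b.1 + ∑ k ∈ Finset.Icc (j+2) i, (z k).1 := by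
    intro i hi
    have hsplit : ∑ k ∈ Finset.range (i+1), (y k).1
        = ∑ k ∈ Finset.Ico 0 (j+2), (y k).1 + ∑ k ∈ Finset.Ico (j+2) (i+1), (y k).1 := by
      rw [Finset.range_eq_Ico]
      exact (Finset.sum_Ico_consecutive _ (by omega) (by omega)).symm
    have h1 : ∑ k ∈ Finset.Ico (j+2) (i+1), (y k).1
        = ∑ k ∈ Finset.Icc (j+2) i, (z k).1 := by
      rw [Finset.Ico_add_one_right_eq_Icc]
      refine Finset.sum_congr rfl (fun k hk => ?_)
      have hk' := (Finset.mem_Icc.mp hk).1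
      rw [hy, recon_of_ne z a b (by omega) (by omega)]
    have h0 : ∑ k ∈ Finset.Ico 0 (j+2), (y k).1 = s + a.1 + b.1 := by
      rw [← Finset.range_eq_Ico]; exact f4
    rw [hsplit, h0, h1]
  have base : psum h (0 + (j+1)) y
      = (∑ i ∈ Finset.range j, h (∑ k ∈ Finset.range (i+1), (z k).1) ((z i).2))
        + h (s + a.1) a.2 + tailSum h j z 0 (a.1 + b.1) b.2 := by
    rw [show (0 + (j+1)) = j + 1 from by omega]
    unfold psum
    rw [Finset.sum_range_succ]
    have hC : ∑ i ∈ Finset.range j, h (∑ k ∈ Finset.range (i+1), (y k).1) ((y i).2)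
        = ∑ i ∈ Finset.range j, h (∑ k ∈ Finset.range (i+1), (z k).1) ((z i).2) := by
      refine Finset.sum_congr rfl (fun i hi => ?_)
      have hi' := Finset.mem_range.mp hi
      rw [f2 (i+1) (by omega), hy, recon_of_ne z a b (by omega) (by omega)]
    have hyj : (y j).2 = a.2 := by rw [hy]; simp [recon]
    rw [hC, f3, hyj]
    simp [tailSum]
  induction n with
  | zero => exact base
  | succ n ih =>
    rw [show (n+1) + (j+1) = (n + (j+1)) + 1 from by omega, psum_succ, ih]
    have htail : tailSum h j z (n+1) (a.1 + b.1) b.2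
        = tailSum h j z n (a.1 + b.1) b.2
          + (if n = 0 then h (s + (a.1 + b.1)) b.2
             else h (s + (a.1 + b.1) + ∑ k ∈ Finset.Icc (j+2) (j+1+n), (z k).1)
                    ((z (j+1+n)).2)) := by
      unfold tailSum
      rw [Finset.sum_range_succ]
    rw [htail]
    have hterm : h (∑ k ∈ Finset.range (n + (j+1) + 1), (y k).1) ((y (n + (j+1))).2)
        = (if n = 0 then h (s + (a.1 + b.1)) b.2
           else h (s + (a.1 + b.1) + ∑ k ∈ Finset.Icc (j+2) (j+1+n), (z k).1)
                  ((z (j+1+n)).2)) := by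
      rcases Nat.eq_zero_or_pos n with hn | hn
      · subst hn
        rw [if_pos rfl, show (0 + (j+1) + 1) = j + 2 from by omega, f4,
          show (0 + (j+1)) = j + 1 from by omega]
        have : (y (j+1)).2 = b.2 := by rw [hy]; simp [recon]
        rw [this, add_assoc]
      · rw [if_neg (by omega)]
        have hidx : n + (j+1) = j + 1 + n := by omega
        have h5 := f5 (j+1+n) (by omega)
        rw [show n + (j+1) + 1 = (j+1+n) + 1 from by omega, h5,
          show n + (j + 1) = j + 1 + n from by omega]
        have hy2 : (y (j+1+n)).2 = (z (j+1+n)).2 := by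
          rw [hy, recon_of_ne z a b (by omega) (by omega)]
        rw [hy2]
        congr 2
        ring
    rw [hterm]
    ring
end Seq

section Seq2
variable {d : ℕ} {h : ℝ → (Fin d → ℝ) → ℝ}

lemma Phi_recon (j : ℕ) (z : ℕ → ℝ × (Fin d → ℝ)) (a b : ℝ × (Fin d → ℝ)) {l : ℝ}
    (hl : Tendsto (fun n => psum h n (recon j z a b)) atTop (nhds l)) :
    Phi h (recon j z a b)
      = (∑ i ∈ Finset.range j, h (∑ k ∈ Finset.range (i+1), (z k).1) ((z i).2))
        + h ((∑ k ∈ Finset.range j, (z k).1) + a.1) a.2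
        + limsupReal (fun n => tailSum h j z n (a.1 + b.1) b.2) := by
  set C := ∑ i ∈ Finset.range j, h (∑ k ∈ Finset.range (i+1), (z k).1) ((z i).2) with hC
  set v := C + h ((∑ k ∈ Finset.range j, (z k).1) + a.1) a.2 with hv
  have h1 : Phi h (recon j z a b) = l := limsupReal_eq_of_tendsto hl
  have h2 : Tendsto (fun n => psum h (n + (j+1)) (recon j z a b)) atTop (nhds l) :=
    hl.comp (tendsto_add_atTop_nat (j+1))
  have h3 : (fun n => tailSum h j z n (a.1 + b.1) b.2)
      = fun n => psum h (n + (j+1)) (recon j z a b) - v := by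
    funext n
    have hp := psum_recon (h := h) j z a b n
    rw [hv, hC]
    linarith
  have h4 : Tendsto (fun n => psum h (n + (j+1)) (recon j z a b) - v) atTop
      (nhds (l - v)) := h2.sub_const v
  have h5 : limsupReal (fun n => tailSum h j z n (a.1 + b.1) b.2) = l - v := by
    rw [h3]; exact limsupReal_eq_of_tendsto h4
  rw [h1, h5, hv]
  ring
end Seq2

/-- If the restriction to `ℝ∖{0}` of the pushforward `(λ_{ℝ₊} ⊗ σ) h⁻¹` is absolutely
continuous with respect to Lebesgue measure, then the restriction to `ℝ∖{0}` of the law of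
the shot noise series `I = Σᵢ h(Tᵢ, Δᵢ)` is absolutely continuous with respect to Lebesgue
measure (the law may have an atom at `0`). The `(Tᵢ)` are the jump times of a Poisson
process of rate `α` and, independently, the `(Δᵢ)` are i.i.d. with law `σ` without atom
at `0`. -/
theorem shotNoise_law_restrict_absolutelyContinuous {Ω : Type*} [MeasurableSpace Ω]
    (P : Measure Ω) [IsProbabilityMeasure P] (d : ℕ) (α : ℝ) (hα : 0 < α)
    (E : ℕ → Ω → ℝ) (Δ : ℕ → Ω → (Fin d → ℝ))
    (hE : ∀ j, Measurable (E j)) (hΔ : ∀ j, Measurable (Δ j))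
    (σ : Measure (Fin d → ℝ)) [IsProbabilityMeasure σ] (hσ0 : σ {0} = 0)
    (hindep : iIndepFun (fun j ω => (E j ω, Δ j ω)) P)
    (hlaw : ∀ j, P.map (fun ω => (E j ω, Δ j ω)) = (expMeasure α).prod σ)
    (h : ℝ → (Fin d → ℝ) → ℝ) (hh : Measurable (fun p : ℝ × (Fin d → ℝ) => h p.1 p.2))
    (I : Ω → ℝ) (hI : Measurable I)
    (hconv : ∀ᵐ ω ∂P,
      Tendsto (fun n => ∑ i ∈ Finset.range n, h (jumpTime E (i + 1) ω) (Δ i ω))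
        atTop (nhds (I ω)))
    (hac : ((((volume.restrict (Set.Ioi (0 : ℝ))).prod σ).map
          (fun q : ℝ × (Fin d → ℝ) => h q.1 q.2)).restrict ({0}ᶜ : Set ℝ))
        ≪ (volume : Measure ℝ)) :
    (P.map I).restrict ({0}ᶜ : Set ℝ) ≪ (volume : Measure ℝ) := by
  haveI : IsProbabilityMeasure (expMeasure α) := isProbabilityMeasure_expMeasure hα
  set μ₂ : Measure (ℝ × (Fin d → ℝ)) := (expMeasure α).prod σ with hμ₂
  set Y : Ω → ℕ → ℝ × (Fin d → ℝ) := fun ω k => (E k ω, Δ k ω) with hY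
  have hYm : Measurable Y := by
    refine measurable_pi_lambda _ (fun k => ?_)
    exact (hE k).prodMk (hΔ k)
  -- convergence in terms of psum
  have hconv' : ∀ᵐ ω ∂P, Tendsto (fun n => psum h n (Y ω)) atTop (nhds (I ω)) := by
    filter_upwards [hconv] with ω hω
    have : (fun n => psum h n (Y ω))
        = fun n => ∑ i ∈ Finset.range n, h (jumpTime E (i + 1) ω) (Δ i ω) := by
      funext n; rfl
    rw [this]; exact hω
  refine Measure.AbsolutelyContinuous.mk (fun s hsm hs0 => ?_)
  rw [Measure.restrict_apply hsm]
  set A : Set ℝ := s ∩ ({0}ᶜ : Set ℝ) with hA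
  have hAm : MeasurableSet A := hsm.inter (measurableSet_singleton 0).compl
  have hA0 : volume A = 0 := measure_mono_null Set.inter_subset_left hs0
  have hA0' : (0:ℝ) ∉ A := fun hmem => hmem.2 rfl
  rw [Measure.map_apply hI hAm]
  -- replace I by Phi ∘ Y
  set W : Set Ω := {ω | (∃ l, Tendsto (fun n => psum h n (Y ω)) atTop (nhds l))
      ∧ Phi h (Y ω) ∈ A} with hW
  have hIW : P (I ⁻¹' A) = P W := by
    refine measure_congr ?_
    rw [Filter.eventuallyEq_set]
    filter_upwards [hconv'] with ω hω
    have hPhi : Phi h (Y ω) = I ω := limsupReal_eq_of_tendsto hω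
    constructor
    · intro hIA
      refine ⟨⟨I ω, hω⟩, ?_⟩
      rw [hPhi]
      exact hIA
    · intro hWω
      show I ω ∈ A
      rw [← hPhi]
      exact hWω.2
  rw [hIW]
  -- W is covered by the events W_j
  set WW : ℕ → Set Ω := fun j => {ω | (∃ l, Tendsto (fun n => psum h n (Y ω)) atTop (nhds l))
      ∧ Phi h (Y ω) ∈ A
      ∧ h (∑ k ∈ Finset.range (j+1), (Y ω k).1) ((Y ω j).2) ≠ 0} with hWW
  have hWsub : W ⊆ ⋃ j, WW j := by
    intro ω hω
    by_contra hnot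
    simp only [Set.mem_iUnion, not_exists] at hnot
    have hzero : ∀ j, h (∑ k ∈ Finset.range (j+1), (Y ω k).1) ((Y ω j).2) = 0 := by
      intro j
      by_contra hne
      exact hnot j ⟨hω.1, hω.2, hne⟩
    have hpz : ∀ n, psum h n (Y ω) = 0 := by
      intro n
      unfold psum
      exact Finset.sum_eq_zero (fun i _ => hzero i)
    have : Phi h (Y ω) = 0 := by
      have ht : Tendsto (fun n => psum h n (Y ω)) atTop (nhds 0) := by
        simp only [hpz]; exact tendsto_const_nhds
      exact limsupReal_eq_of_tendsto ht
    exact hA0' (this ▸ hω.2)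
  refine measure_mono_null hWsub (measure_iUnion_null (fun j => ?_))
  -- fix j : show P (WW j) = 0
  classical
  set t : Set ℕ := {j, j+1} with ht
  set U : Ω → (ℝ × (Fin d → ℝ)) × (ℝ × (Fin d → ℝ)) := fun ω => (Y ω j, Y ω (j+1)) with hU
  set Z : Ω → ℕ → ℝ × (Fin d → ℝ) :=
    fun ω k => if k = j ∨ k = j+1 then ((0 : ℝ), (0 : Fin d → ℝ)) else Y ω k with hZ
  have hUm : Measurable U := ((hE j).prodMk (hΔ j)).prodMk ((hE (j+1)).prodMk (hΔ (j+1)))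
  have hZm : Measurable Z := by
    refine measurable_pi_lambda _ (fun k => ?_)
    by_cases hk : k = j ∨ k = j+1
    · have : (fun ω => Z ω k) = fun _ => ((0 : ℝ), (0 : Fin d → ℝ)) :=
        funext fun ω => if_pos hk
      rw [this]; exact measurable_const
    · have : (fun ω => Z ω k) = fun ω => Y ω k := funext fun ω => if_neg hk
      rw [this]; exact (hE k).prodMk (hΔ k)
  -- independence of Z and U
  have h_le : ∀ k : ℕ, MeasurableSpace.comap (fun ω => (E k ω, Δ k ω))
      (inferInstance : MeasurableSpace (ℝ × (Fin d → ℝ))) ≤ (inferInstance : MeasurableSpace Ω) :=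
    fun k => measurable_iff_comap_le.mp ((hE k).prodMk (hΔ k))
  have hblock := (indep_biSup_compl h_le hindep t).symm
  have hUle : MeasurableSpace.comap U inferInstance
      ≤ ⨆ n ∈ t, MeasurableSpace.comap (fun ω => (E n ω, Δ n ω)) inferInstance := by
    refine measurable_iff_comap_le.mp ?_
    refine Measurable.prodMk ?_ ?_
    · exact measurable_iff_comap_le.mpr
        (le_biSup (fun n => MeasurableSpace.comap (fun ω => (E n ω, Δ n ω)) inferInstance)
          (show j ∈ t by simp [ht]))
    · exact measurable_iff_comap_le.mpr
        (le_biSup (fun n => MeasurableSpace.comap (fun ω => (E n ω, Δ n ω)) inferInstance)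
          (show j+1 ∈ t by simp [ht]))
  have hZle : MeasurableSpace.comap Z inferInstance
      ≤ ⨆ n ∈ tᶜ, MeasurableSpace.comap (fun ω => (E n ω, Δ n ω)) inferInstance := by
    letI M' : MeasurableSpace Ω :=
      ⨆ n ∈ tᶜ, MeasurableSpace.comap (fun ω => (E n ω, Δ n ω)) inferInstance
    refine measurable_iff_comap_le.mp ?_
    rw [measurable_pi_iff]
    intro k
    by_cases hk : k = j ∨ k = j+1
    · have : (fun ω => Z ω k) = fun _ => ((0 : ℝ), (0 : Fin d → ℝ)) :=
        funext fun ω => if_pos hk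
      rw [this]
      exact measurable_const
    · have heq : (fun ω => Z ω k) = fun ω => Y ω k := funext fun ω => if_neg hk
      rw [heq]
      refine measurable_iff_comap_le.mpr
        (le_biSup (fun n => MeasurableSpace.comap (fun ω => (E n ω, Δ n ω)) inferInstance)
          (show k ∈ tᶜ from ?_))
      simp only [ht, Set.mem_compl_iff, Set.mem_insert_iff, Set.mem_singleton_iff]
      tauto
  have hindepZU : IndepFun Z U P :=
    indep_of_indep_of_le_right (indep_of_indep_of_le_left hblock hZle) hUle
  have hmapZU : P.map (fun ω => (Z ω, U ω)) = (P.map Z).prod (P.map U) :=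
    (indepFun_iff_map_prod_eq_prod_map_map hZm.aemeasurable hUm.aemeasurable).mp hindepZU
  have hUY : IndepFun (fun ω => (E j ω, Δ j ω)) (fun ω => (E (j+1) ω, Δ (j+1) ω)) P :=
    hindep.indepFun (by omega)
  have hmapU : P.map U = μ₂.prod μ₂ := by
    have hUeq : U = fun ω => ((E j ω, Δ j ω), (E (j+1) ω, Δ (j+1) ω)) := rfl
    rw [hUeq, (indepFun_iff_map_prod_eq_prod_map_map (((hE j).prodMk (hΔ j)).aemeasurable)
      (((hE (j+1)).prodMk (hΔ (j+1))).aemeasurable)).mp hUY, hlaw j, hlaw (j+1)]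
  -- the event in sequence space
  set S : Set ((ℕ → ℝ × (Fin d → ℝ)) × ((ℝ × (Fin d → ℝ)) × (ℝ × (Fin d → ℝ)))) :=
    {q | (∃ l, Tendsto (fun n => psum h n (recon j q.1 q.2.1 q.2.2)) atTop (nhds l))
      ∧ Phi h (recon j q.1 q.2.1 q.2.2) ∈ A
      ∧ h (∑ k ∈ Finset.range (j+1), ((recon j q.1 q.2.1 q.2.2) k).1)
          (((recon j q.1 q.2.1 q.2.2) j).2) ≠ 0} with hS
  have hr := measurable_recon (d := d) j
  have hSm : MeasurableSet S := by
    have h1 : MeasurableSet {q : (ℕ → ℝ × (Fin d → ℝ)) ×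
        ((ℝ × (Fin d → ℝ)) × (ℝ × (Fin d → ℝ))) |
        ∃ l, Tendsto (fun n => psum h n (recon j q.1 q.2.1 q.2.2)) atTop (nhds l)} :=
      measurableSet_exists_tendsto (fun n => (measurable_psum hh n).comp hr)
    have h2 : MeasurableSet {q : (ℕ → ℝ × (Fin d → ℝ)) ×
        ((ℝ × (Fin d → ℝ)) × (ℝ × (Fin d → ℝ))) | Phi h (recon j q.1 q.2.1 q.2.2) ∈ A} :=
      ((measurable_Phi hh).comp hr) hAm
    have hg : Measurable (fun q : (ℕ → ℝ × (Fin d → ℝ)) ×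
        ((ℝ × (Fin d → ℝ)) × (ℝ × (Fin d → ℝ))) =>
        h (∑ k ∈ Finset.range (j+1), ((recon j q.1 q.2.1 q.2.2) k).1)
          (((recon j q.1 q.2.1 q.2.2) j).2)) := by
      have hm1 : Measurable (fun q : (ℕ → ℝ × (Fin d → ℝ)) ×
          ((ℝ × (Fin d → ℝ)) × (ℝ × (Fin d → ℝ))) =>
          ∑ k ∈ Finset.range (j+1), ((recon j q.1 q.2.1 q.2.2) k).1) :=
        Finset.measurable_sum (Finset.range (j+1))
          (fun k _ => ((measurable_pi_apply k).comp hr).fst)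
      have hm2 : Measurable (fun q : (ℕ → ℝ × (Fin d → ℝ)) ×
          ((ℝ × (Fin d → ℝ)) × (ℝ × (Fin d → ℝ))) =>
          ((recon j q.1 q.2.1 q.2.2) j).2) := ((measurable_pi_apply j).comp hr).snd
      exact hh.comp (hm1.prodMk hm2)
    have h3 : MeasurableSet {q : (ℕ → ℝ × (Fin d → ℝ)) ×
        ((ℝ × (Fin d → ℝ)) × (ℝ × (Fin d → ℝ))) |
        h (∑ k ∈ Finset.range (j+1), ((recon j q.1 q.2.1 q.2.2) k).1)
          (((recon j q.1 q.2.1 q.2.2) j).2) ≠ 0} := hg (measurableSet_singleton 0).compl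
    exact h1.inter (h2.inter h3)
  have hWWS : WW j = (fun ω => (Z ω, U ω)) ⁻¹' S := by
    ext ω
    have hrecon : recon j (Z ω) (U ω).1 (U ω).2 = Y ω := by
      funext k
      by_cases h1 : k = j
      · subst h1; simp [recon, hU]
      by_cases h2 : k = j+1
      · subst h2; simp [recon, h1, hU]
      · have : Z ω k = Y ω k := if_neg (by tauto)
        simp [recon, h1, h2, this]
    simp only [hWW, Set.mem_setOf_eq, Set.mem_preimage, hS, hrecon]
  have hPWW : P (WW j) = ((P.map Z).prod (μ₂.prod μ₂)) S := by
    rw [hWWS, ← Measure.map_apply (hZm.prodMk hUm) hSm, hmapZU, hmapU]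
  haveI : IsProbabilityMeasure (P.map Z) := Measure.isProbabilityMeasure_map hZm.aemeasurable
  rw [hPWW, Measure.prod_apply hSm]
  -- a.e. nonnegativity of the partial sums of z
  have hEk : ∀ k : ℕ, ∀ᵐ ω ∂P, 0 ≤ E k ω := by
    intro k
    have hmapE : P.map (E k) = expMeasure α := by
      have hEq : E k = Prod.fst ∘ (fun ω => (E k ω, Δ k ω)) := rfl
      rw [hEq, ← Measure.map_map measurable_fst ((hE k).prodMk (hΔ k)), hlaw k]
      simp [hμ₂, Measure.map_fst_prod]
    have hae : ∀ᵐ x ∂(P.map (E k)), 0 ≤ x := by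
      rw [hmapE, ae_iff]
      have hset : {x : ℝ | ¬ 0 ≤ x} = Set.Iio 0 := by ext x; simp
      rw [hset]
      show expMeasure α (Set.Iio 0) = 0
      rw [show expMeasure α = volume.withDensity (exponentialPDF α) from rfl,
        withDensity_apply _ measurableSet_Iio]
      exact lintegral_exponentialPDF_of_nonpos le_rfl
    exact (ae_map_iff (hE k).aemeasurable measurableSet_Ici).mp hae
  have hZpos : ∀ᵐ z ∂(P.map Z), 0 ≤ ∑ k ∈ Finset.range j, (z k).1 := by
    have hsetm : MeasurableSet {z : ℕ → ℝ × (Fin d → ℝ) | 0 ≤ ∑ k ∈ Finset.range j, (z k).1} :=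
      (Finset.measurable_sum _ (fun k _ => (measurable_pi_apply k).fst)) measurableSet_Ici
    rw [ae_map_iff hZm.aemeasurable hsetm]
    have hall : ∀ᵐ ω ∂P, ∀ k ∈ Finset.range j, 0 ≤ (Z ω k).1 := by
      rw [Filter.eventually_all_finset]
      intro k hk
      have hkj := Finset.mem_range.mp hk
      filter_upwards [hEk k] with ω hω
      have : Z ω k = (E k ω, Δ k ω) := if_neg (by omega)
      rw [this]
      exact hω
    filter_upwards [hall] with ω hω
    exact Finset.sum_nonneg hω
  -- inner measure vanishes for good z
  have hinner : ∀ z : ℕ → ℝ × (Fin d → ℝ), 0 ≤ ∑ k ∈ Finset.range j, (z k).1 →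
      (μ₂.prod μ₂) (Prod.mk z ⁻¹' S) = 0 := by
    intro z hz
    set C0 : ℝ := ∑ i ∈ Finset.range j, h (∑ k ∈ Finset.range (i+1), (z k).1) ((z i).2)
      with hC0
    set T0 : ℝ → (Fin d → ℝ) → ℝ := fun u x' => limsupReal (fun n => tailSum h j z n u x')
      with hT0
    have hT0m : Measurable (fun p : ℝ × (Fin d → ℝ) => T0 p.1 p.2) :=
      measurable_limsupReal (fun n => measurable_tailSum hh j z n)
    have hkey := key_null hh hac hα hAm hA0 C0 hz hT0m
    refine measure_mono_null ?_ hkey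
    rintro ⟨a, b⟩ hab
    obtain ⟨⟨l, hl⟩, hPhiA, hterm⟩ := hab
    have htermj : h (∑ k ∈ Finset.range (j+1), ((recon j z a b) k).1)
        (((recon j z a b) j).2) = h ((∑ k ∈ Finset.range j, (z k).1) + a.1) a.2 := by
      have hsum : ∑ k ∈ Finset.range (j+1), ((recon j z a b) k).1
          = (∑ k ∈ Finset.range j, (z k).1) + a.1 := by
        rw [Finset.sum_range_succ]
        congr 1
        · refine Finset.sum_congr rfl (fun k hk => ?_)
          have := Finset.mem_range.mp hk
          rw [recon_of_ne z a b (by omega) (by omega)]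
        · simp [recon]
      rw [hsum]
      congr 1
      simp [recon]
    have hPhi := Phi_recon j z a b hl
    constructor
    · show h ((∑ k ∈ Finset.range j, (z k).1) + a.1) a.2 ≠ 0
      rw [← htermj]
      exact hterm
    · show C0 + h ((∑ k ∈ Finset.range j, (z k).1) + a.1) a.2 + T0 (a.1 + b.1) b.2 ∈ A
      rw [hT0, hC0]
      rw [hPhi] at hPhiA
      exact hPhiA
  calc ∫⁻ z, (μ₂.prod μ₂) (Prod.mk z ⁻¹' S) ∂(P.map Z)
      = ∫⁻ _, 0 ∂(P.map Z) := lintegral_congr_ae (hZpos.mono (fun z hz => hinner z hz))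
    _ = 0 := lintegral_zero
end

section
/- Let g : ℝ₊ → ℝ be measurable with λ_{ℝ₊} g^{−1} absolutely continuous with respect to Lebesgue measure. Let (Tᵢ) be Poisson jump times and (Δᵢ) i.i.d. real random variables with law σ without atom at 0, independent of (Tᵢ), such that the series I = Σ_{i≥1} Δᵢ g(Tᵢ) converges a.s. Then the law of I is absolutely continuous with respect to Lebesgue measure on ℝ. -/
open MeasureTheory ProbabilityTheory Filter
open scoped ENNReal

/-- `i`-th term of the tail series (terms of index `≥ 1`) of the shot noise, written on the
canonical space: `p = (s, δ₁, u)` where `s` is the second jump time, `δ₁` the second mark,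
and `u j = (E (j+2), Δ (j+2))`. -/
noncomputable def snTerm (g : ℝ → ℝ) (i : ℕ) (p : ℝ × ℝ × (ℕ → ℝ × ℝ)) : ℝ :=
  (match i with
    | 0 => p.2.1
    | (k + 1) => (p.2.2 k).2) * g (p.1 + ∑ j ∈ Finset.range i, (p.2.2 j).1)

/-- Partial sums of the tail series. -/
noncomputable def snPartial (g : ℝ → ℝ) (n : ℕ) (p : ℝ × ℝ × (ℕ → ℝ × ℝ)) : ℝ :=
  ∑ i ∈ Finset.range n, snTerm g i p

open Classical in
/-- Limit (when it exists) of the tail series. -/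
noncomputable def snLim (g : ℝ → ℝ) (p : ℝ × ℝ × (ℕ → ℝ × ℝ)) : ℝ :=
  if h : ∃ c, Tendsto (fun n => snPartial g n p) atTop (nhds c) then h.choose else 0

/-- The shot noise as a function on the canonical space. -/
noncomputable def snF (g : ℝ → ℝ) (q : ((ℝ × ℝ) × (ℝ × ℝ)) × (ℕ → ℝ × ℝ)) : ℝ :=
  q.1.1.2 * g q.1.1.1 + snLim g (q.1.1.1 + q.1.2.1, q.1.2.2, q.2)

lemma measurable_snTerm {g : ℝ → ℝ} (hg : Measurable g) (i : ℕ) :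
    Measurable (snTerm g i) := by
  apply Measurable.mul
  · cases i with
    | zero => exact measurable_snd.fst
    | succ k => exact ((measurable_pi_apply k).comp measurable_snd.snd).snd
  · exact hg.comp (measurable_fst.add (Finset.measurable_sum _ fun j _ =>
      ((measurable_pi_apply j).comp measurable_snd.snd).fst))

lemma measurable_snPartial {g : ℝ → ℝ} (hg : Measurable g) (n : ℕ) :
    Measurable (snPartial g n) :=
  Finset.measurable_sum _ fun i _ => measurable_snTerm hg i

open Classical in
lemma measurable_snLim {g : ℝ → ℝ} (hg : Measurable g) : Measurable (snLim g) := by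
  have hD : MeasurableSet {p : ℝ × ℝ × (ℕ → ℝ × ℝ) |
      ∃ c, Tendsto (fun n => snPartial g n p) atTop (nhds c)} :=
    measurableSet_exists_tendsto fun n => measurable_snPartial hg n
  have hmeas : ∀ n, Measurable (fun p : ℝ × ℝ × (ℕ → ℝ × ℝ) =>
      if ∃ c, Tendsto (fun m => snPartial g m p) atTop (nhds c) then snPartial g n p else 0) :=
    fun n => Measurable.ite hD (measurable_snPartial hg n) measurable_const
  apply measurable_of_tendsto_metrizable hmeas
  rw [tendsto_pi_nhds]
  intro p
  by_cases hp : ∃ c, Tendsto (fun m => snPartial g m p) atTop (nhds c)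
  · simp only [hp, if_true, snLim, dif_pos hp]
    exact hp.choose_spec
  · simp only [hp, if_false, snLim, dif_neg hp]
    exact tendsto_const_nhds

open Classical in
lemma snLim_eq {g : ℝ → ℝ} {p : ℝ × ℝ × (ℕ → ℝ × ℝ)} {c : ℝ}
    (hc : Tendsto (fun n => snPartial g n p) atTop (nhds c)) : snLim g p = c := by
  have h : ∃ c, Tendsto (fun n => snPartial g n p) atTop (nhds c) := ⟨c, hc⟩
  rw [snLim, dif_pos h]
  exact tendsto_nhds_unique h.choose_spec hc

lemma measurable_snF {g : ℝ → ℝ} (hg : Measurable g) : Measurable (snF g) := by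
  apply Measurable.add
  · exact measurable_fst.fst.snd.mul (hg.comp measurable_fst.fst.fst)
  · exact (measurable_snLim hg).comp
      ((measurable_fst.fst.fst.add measurable_fst.snd.fst).prodMk
        (measurable_fst.snd.snd.prodMk measurable_snd))

/-- Monotonicity of independence of σ-algebras. -/
lemma indep_mono_aux {Ω : Type*} {mΩ : MeasurableSpace Ω} {μ : Measure Ω}
    {m₁ m₂ m₁' m₂' : MeasurableSpace Ω}
    (h : ProbabilityTheory.Indep m₁ m₂ μ) (h1 : m₁' ≤ m₁) (h2 : m₂' ≤ m₂) :
    ProbabilityTheory.Indep m₁' m₂' μ :=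
  fun t1 t2 ht1 ht2 => h t1 t2 (h1 _ ht1) (h2 _ ht2)

/-- The exponential law is absolutely continuous w.r.t. Lebesgue measure on `(0, ∞)`. -/
lemma expMeasure_ac_restrict {α : ℝ} :
    expMeasure α ≪ (volume : Measure ℝ).restrict (Set.Ioi (0 : ℝ)) := by
  have hexpv : expMeasure α ≪ (volume : Measure ℝ) :=
    withDensity_absolutelyContinuous volume (gammaPDF 1 α)
  refine Measure.AbsolutelyContinuous.mk fun s hs h0 => ?_
  rw [Measure.restrict_apply hs] at h0
  have hsub : s ⊆ (s ∩ Set.Ioi 0) ∪ Set.Iic 0 := by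
    intro u hu
    by_cases h : 0 < u
    · exact Or.inl ⟨hu, h⟩
    · exact Or.inr (not_lt.mp h)
  have h1 : expMeasure α (s ∩ Set.Ioi 0) = 0 := hexpv h0
  have h2 : expMeasure α (Set.Iic 0) = 0 := by
    have hsplit : (Set.Iic (0 : ℝ)) ⊆ Set.Iio 0 ∪ {0} := by
      intro u hu
      rcases lt_or_eq_of_le (Set.mem_Iic.mp hu) with h | h
      · exact Or.inl h
      · exact Or.inr (by simp [h])
    have hIio : expMeasure α (Set.Iio 0) = 0 := by
      show (volume.withDensity (gammaPDF 1 α)) (Set.Iio 0) = 0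
      rw [withDensity_apply _ measurableSet_Iio]
      exact lintegral_gammaPDF_of_nonpos le_rfl
    have h0' : expMeasure α ({0} : Set ℝ) = 0 := hexpv (by simp)
    refine le_antisymm ?_ (by positivity)
    calc expMeasure α (Set.Iic 0) ≤ expMeasure α (Set.Iio 0 ∪ {0}) := measure_mono hsplit
      _ ≤ expMeasure α (Set.Iio 0) + expMeasure α {0} := measure_union_le _ _
      _ = 0 := by rw [hIio, h0', add_zero]
  refine le_antisymm ?_ (by positivity)
  calc expMeasure α s ≤ expMeasure α ((s ∩ Set.Ioi 0) ∪ Set.Iic 0) := measure_mono hsub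
    _ ≤ expMeasure α (s ∩ Set.Ioi 0) + expMeasure α (Set.Iic 0) := measure_union_le _ _
    _ = 0 := by rw [h1, h2, add_zero]

/-- If the pushforward `λ_{ℝ₊} g⁻¹` is absolutely continuous with respect to Lebesgue
measure, then the law of the shot noise series `I = Σᵢ Δᵢ g(Tᵢ)` is absolutely continuous
with respect to Lebesgue measure. The `(Tᵢ)` are the jump times of a Poisson process of
rate `α` and, independently, the `(Δᵢ)` are i.i.d. real random variables with law `σ`
without atom at `0`. -/
theorem shotNoise_linear_law_absolutelyContinuous {Ω : Type*} [MeasurableSpace Ω]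
    (P : Measure Ω) [IsProbabilityMeasure P] (α : ℝ) (hα : 0 < α)
    (E : ℕ → Ω → ℝ) (Δ : ℕ → Ω → ℝ)
    (hE : ∀ j, Measurable (E j)) (hΔ : ∀ j, Measurable (Δ j))
    (σ : Measure ℝ) [IsProbabilityMeasure σ] (hσ0 : σ {0} = 0)
    (hindep : iIndepFun (fun j ω => (E j ω, Δ j ω)) P)
    (hlaw : ∀ j, P.map (fun ω => (E j ω, Δ j ω)) = (expMeasure α).prod σ)
    (g : ℝ → ℝ) (hg : Measurable g)
    (hgac : (volume.restrict (Set.Ioi (0 : ℝ))).map g ≪ (volume : Measure ℝ))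
    (I : Ω → ℝ) (hI : Measurable I)
    (hconv : ∀ᵐ ω ∂P,
      Tendsto (fun n => ∑ i ∈ Finset.range n, Δ i ω * g (jumpTime E (i + 1) ω))
        atTop (nhds (I ω))) :
    P.map I ≪ (volume : Measure ℝ) := by
  classical
  haveI hexpP : IsProbabilityMeasure (expMeasure α) := isProbabilityMeasure_expMeasure hα
  -- shorthand
  set W : Ω → ℕ → ℝ × ℝ := fun ω j => (E (j + 2) ω, Δ (j + 2) ω) with hWdef
  have hWm : Measurable W := measurable_pi_lambda _ fun j => (hE (j + 2)).prodMk (hΔ (j + 2))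
  set V : Ω → (ℝ × ℝ) × (ℝ × ℝ) := fun ω => ((E 0 ω, Δ 0 ω), (E 1 ω, Δ 1 ω)) with hVdef
  have hVm : Measurable V := ((hE 0).prodMk (hΔ 0)).prodMk ((hE 1).prodMk (hΔ 1))
  set Φ : Ω → ((ℝ × ℝ) × (ℝ × ℝ)) × (ℕ → ℝ × ℝ) := fun ω => (V ω, W ω) with hΦdef
  have hΦm : Measurable Φ := hVm.prodMk hWm
  have hFm : Measurable (snF g) := measurable_snF hg
  set ν : Measure (ℕ → ℝ × ℝ) := P.map W with hνdef
  haveI hν : IsProbabilityMeasure ν := Measure.isProbabilityMeasure_map hWm.aemeasurable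
  -- independence of V and W
  have hpairm : ∀ j : ℕ, Measurable (fun ω => (E j ω, Δ j ω)) :=
    fun j => (hE j).prodMk (hΔ j)
  have hMle : ∀ i : ℕ,
      MeasurableSpace.comap (fun ω => (E i ω, Δ i ω)) inferInstance
        ≤ (inferInstance : MeasurableSpace Ω) :=
    fun i => measurable_iff_comap_le.mp (hpairm i)
  have hbig : ProbabilityTheory.Indep
      (⨆ i ∈ ({0, 1} : Set ℕ),
        MeasurableSpace.comap (fun ω => (E i ω, Δ i ω)) inferInstance)
      (⨆ i ∈ {n : ℕ | 2 ≤ n},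
        MeasurableSpace.comap (fun ω => (E i ω, Δ i ω)) inferInstance) P := by
    refine indep_iSup_of_disjoint hMle hindep ?_
    rw [Set.disjoint_left]
    intro a ha hb
    simp only [Set.mem_insert_iff, Set.mem_singleton_iff] at ha
    simp only [Set.mem_setOf_eq] at hb
    rcases ha with rfl | rfl <;> omega
  have hVle : MeasurableSpace.comap V inferInstance
      ≤ ⨆ i ∈ ({0, 1} : Set ℕ),
          MeasurableSpace.comap (fun ω => (E i ω, Δ i ω)) inferInstance := by
    refine measurable_iff_comap_le.mp (Measurable.prodMk ?_ ?_)
    · exact measurable_iff_comap_le.mpr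
        (le_iSup₂ (f := fun (i : ℕ) (_ : i ∈ ({0, 1} : Set ℕ)) =>
          MeasurableSpace.comap (fun ω => (E i ω, Δ i ω)) inferInstance) 0 (by simp))
    · exact measurable_iff_comap_le.mpr
        (le_iSup₂ (f := fun (i : ℕ) (_ : i ∈ ({0, 1} : Set ℕ)) =>
          MeasurableSpace.comap (fun ω => (E i ω, Δ i ω)) inferInstance) 1 (by simp))
  have hWle : MeasurableSpace.comap W inferInstance
      ≤ ⨆ i ∈ {n : ℕ | 2 ≤ n},
          MeasurableSpace.comap (fun ω => (E i ω, Δ i ω)) inferInstance := by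
    letI m₂ : MeasurableSpace Ω := ⨆ i ∈ {n : ℕ | 2 ≤ n},
      MeasurableSpace.comap (fun ω => (E i ω, Δ i ω)) inferInstance
    refine measurable_iff_comap_le.mp ?_
    rw [measurable_pi_iff]
    intro j
    exact measurable_iff_comap_le.mpr
      (le_iSup₂ (f := fun (i : ℕ) (_ : i ∈ {n : ℕ | 2 ≤ n}) =>
        MeasurableSpace.comap (fun ω => (E i ω, Δ i ω)) inferInstance) (j + 2)
          (by simp [Set.mem_setOf_eq]))
  have hVW : IndepFun V W P := indep_mono_aux hbig hVle hWle
  -- the law of Φ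
  have hmapV : P.map V = ((expMeasure α).prod σ).prod ((expMeasure α).prod σ) := by
    have h01 : IndepFun (fun ω => (E 0 ω, Δ 0 ω)) (fun ω => (E 1 ω, Δ 1 ω)) P :=
      hindep.indepFun (by norm_num)
    rw [indepFun_iff_map_prod_eq_prod_map_map (hpairm 0).aemeasurable
      (hpairm 1).aemeasurable] at h01
    calc P.map V = P.map (fun ω => ((E 0 ω, Δ 0 ω), (E 1 ω, Δ 1 ω))) := by rw [hVdef]
      _ = (P.map (fun ω => (E 0 ω, Δ 0 ω))).prod (P.map (fun ω => (E 1 ω, Δ 1 ω))) := h01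
      _ = ((expMeasure α).prod σ).prod ((expMeasure α).prod σ) := by rw [hlaw 0, hlaw 1]
  have hmapΦ : P.map Φ = (((expMeasure α).prod σ).prod ((expMeasure α).prod σ)).prod ν := by
    rw [indepFun_iff_map_prod_eq_prod_map_map hVm.aemeasurable hWm.aemeasurable] at hVW
    calc P.map Φ = P.map (fun ω => (V ω, W ω)) := by rw [hΦdef]
      _ = (P.map V).prod (P.map W) := hVW
      _ = (((expMeasure α).prod σ).prod ((expMeasure α).prod σ)).prod ν := by
          rw [hmapV, hνdef]
  -- a.e. identity : I = snF g ∘ Φ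
  have hae : I =ᵐ[P] fun ω => snF g (Φ ω) := by
    filter_upwards [hconv] with ω hω
    have hsum2 : ∀ i : ℕ,
        jumpTime E (i + 2) ω = E 0 ω + E 1 ω + ∑ j ∈ Finset.range i, E (j + 2) ω := by
      intro i
      show ∑ j ∈ Finset.range (i + 2), E j ω = _
      rw [Finset.sum_range_succ' (fun j => E j ω) (i + 1),
        Finset.sum_range_succ' (fun j => E (j + 1) ω) i]
      have hE2 : ∀ j : ℕ, E (j + 1 + 1) ω = E (j + 2) ω := fun j => rfl
      simp only [hE2]
      ring
    set p : ℝ × ℝ × (ℕ → ℝ × ℝ) :=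
      (E 0 ω + E 1 ω, Δ 1 ω, fun j => (E (j + 2) ω, Δ (j + 2) ω)) with hpdef
    have hterm : ∀ i : ℕ, snTerm g i p = Δ (i + 1) ω * g (jumpTime E (i + 2) ω) := by
      intro i
      cases i with
      | zero =>
        simp only [snTerm, hpdef, Finset.range_zero, Finset.sum_empty, add_zero]
        rw [hsum2 0]
        simp
      | succ k =>
        simp only [snTerm, hpdef]
        rw [hsum2 (k + 1)]
    have hj1 : jumpTime E 1 ω = E 0 ω := by simp [jumpTime]
    have hS : ∀ n : ℕ, snPartial g n p =
        (∑ i ∈ Finset.range (n + 1), Δ i ω * g (jumpTime E (i + 1) ω))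
          - Δ 0 ω * g (E 0 ω) := by
      intro n
      rw [Finset.sum_range_succ' (fun i => Δ i ω * g (jumpTime E (i + 1) ω)) n]
      have hnat : ∀ i : ℕ, i + 1 + 1 = i + 2 := fun i => rfl
      simp only [snPartial, hterm, hnat, hj1]
      ring
    have hlim : Tendsto (fun n => snPartial g n p) atTop
        (nhds (I ω - Δ 0 ω * g (E 0 ω))) := by
      simp only [hS]
      exact Tendsto.sub_const (hω.comp (tendsto_add_atTop_nat 1)) _
    have hsnl : snLim g p = I ω - Δ 0 ω * g (E 0 ω) := snLim_eq hlim
    show I ω = snF g (Φ ω)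
    rw [hΦdef]
    simp only [snF, hVdef, hWdef]
    rw [show ((E 0 ω + E 1 ω, Δ 1 ω, fun j => (E (j + 2) ω, Δ (j + 2) ω)) :
        ℝ × ℝ × (ℕ → ℝ × ℝ)) = p from hpdef.symm] at *
    rw [hsnl]
    ring
  -- reduce to the canonical space
  have hmapI : P.map I
      = ((((expMeasure α).prod σ).prod ((expMeasure α).prod σ)).prod ν).map (snF g) := by
    rw [Measure.map_congr hae]
    have hcomp : (fun ω => snF g (Φ ω)) = snF g ∘ Φ := rfl
    rw [hcomp, ← Measure.map_map hFm hΦm, hmapΦ]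
  rw [hmapI]
  -- absolute continuity
  refine Measure.AbsolutelyContinuous.mk fun A hA hA0 => ?_
  rw [Measure.map_apply hFm hA]
  set μ₁ : Measure ℝ := volume.restrict (Set.Ioi (0 : ℝ)) with hμ₁def
  have hexpv : expMeasure α ≪ (volume : Measure ℝ) :=
    withDensity_absolutelyContinuous volume (gammaPDF 1 α)
  have hexpres : expMeasure α ≪ μ₁ := expMeasure_ac_restrict
  have hacM : (((expMeasure α).prod σ).prod ((expMeasure α).prod σ)).prod ν
      ≪ ((μ₁.prod σ).prod ((volume : Measure ℝ).prod σ)).prod ν :=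
    Measure.AbsolutelyContinuous.prod
      (Measure.AbsolutelyContinuous.prod
        (hexpres.prod (Measure.AbsolutelyContinuous.refl σ))
        (hexpv.prod (Measure.AbsolutelyContinuous.refl σ)))
      (Measure.AbsolutelyContinuous.refl ν)
  apply hacM
  -- main computation
  set f₀ : ℝ → ℝ≥0∞ := Set.indicator A (fun _ => (1 : ℝ≥0∞)) with hf₀def
  have hf₀ : Measurable f₀ := measurable_const.indicator hA
  have hH : Measurable (snLim g) := measurable_snLim hg
  set P₂ : Measure (ℝ × (ℕ → ℝ × ℝ)) := σ.prod ν with hP₂def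
  set Ψ : ℝ × ℝ → ℝ≥0∞ := fun cs => ∫⁻ b, f₀ (cs.1 + snLim g (cs.2, b)) ∂P₂ with hΨdef
  have hΨker : Measurable (fun x : (ℝ × ℝ) × (ℝ × (ℕ → ℝ × ℝ)) =>
      f₀ (x.1.1 + snLim g (x.1.2, x.2))) :=
    hf₀.comp (measurable_fst.fst.add (hH.comp (measurable_fst.snd.prodMk measurable_snd)))
  have hΨ : Measurable Ψ := Measurable.lintegral_prod_right' hΨker
  have hq : Measurable fun q : ((ℝ × ℝ) × (ℝ × ℝ)) × (ℕ → ℝ × ℝ) => f₀ (snF g q) :=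
    hf₀.comp hFm
  calc (((μ₁.prod σ).prod ((volume : Measure ℝ).prod σ)).prod ν) (snF g ⁻¹' A)
      = ∫⁻ q, f₀ (snF g q) ∂(((μ₁.prod σ).prod ((volume : Measure ℝ).prod σ)).prod ν) := by
        rw [← lintegral_indicator_one (hFm hA)]
        refine lintegral_congr fun q => ?_
        by_cases h : snF g q ∈ A
        · simp [hf₀def, Set.indicator_of_mem, h, Set.mem_preimage]
        · simp [hf₀def, Set.indicator_of_notMem, h, Set.mem_preimage]
    _ = ∫⁻ v, ∫⁻ w, f₀ (snF g (v, w)) ∂ν ∂((μ₁.prod σ).prod ((volume : Measure ℝ).prod σ)) :=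
        lintegral_prod _ hq.aemeasurable
    _ = ∫⁻ a, ∫⁻ b, ∫⁻ w, f₀ (snF g ((a, b), w)) ∂ν ∂((volume : Measure ℝ).prod σ)
          ∂(μ₁.prod σ) :=
        lintegral_prod _ (Measurable.lintegral_prod_right' hq).aemeasurable
    _ = ∫⁻ a, ∫⁻ y, ∫⁻ δ₁, ∫⁻ w, f₀ (snF g ((a, (y, δ₁)), w)) ∂ν ∂σ ∂(volume : Measure ℝ)
          ∂(μ₁.prod σ) := by
        refine lintegral_congr fun a => ?_
        have hm : Measurable fun bw : (ℝ × ℝ) × (ℕ → ℝ × ℝ) =>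
            f₀ (snF g ((a, bw.1), bw.2)) :=
          hq.comp ((measurable_const.prodMk measurable_fst).prodMk measurable_snd)
        exact lintegral_prod _ (Measurable.lintegral_prod_right' hm).aemeasurable
    _ = ∫⁻ a, ∫⁻ y, Ψ (a.2 * g a.1, a.1 + y) ∂(volume : Measure ℝ) ∂(μ₁.prod σ) := by
        refine lintegral_congr fun a => lintegral_congr fun y => ?_
        have hm : Measurable fun b : ℝ × (ℕ → ℝ × ℝ) =>
            f₀ (a.2 * g a.1 + snLim g (a.1 + y, b)) :=
          hf₀.comp (measurable_const.add (hH.comp (measurable_const.prodMk measurable_id)))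
        simp only [hΨdef]
        exact (lintegral_prod _ hm.aemeasurable).symm
    _ = ∫⁻ a, ∫⁻ s, Ψ (a.2 * g a.1, s) ∂(volume : Measure ℝ) ∂(μ₁.prod σ) := by
        refine lintegral_congr fun a => ?_
        exact (measurePreserving_add_left volume a.1).lintegral_comp
          (hΨ.comp (measurable_const.prodMk measurable_id))
    _ = ∫⁻ x, ∫⁻ δ₀, ∫⁻ s, Ψ (δ₀ * g x, s) ∂(volume : Measure ℝ) ∂σ ∂μ₁ := by
        have hm : Measurable fun az : (ℝ × ℝ) × ℝ => Ψ (az.1.2 * g az.1.1, az.2) :=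
          hΨ.comp ((measurable_fst.snd.mul (hg.comp measurable_fst.fst)).prodMk
            measurable_snd)
        exact lintegral_prod _ (Measurable.lintegral_prod_right' hm).aemeasurable
    _ = ∫⁻ x, ∫⁻ pz, Ψ (pz.1 * g x, pz.2) ∂(σ.prod (volume : Measure ℝ)) ∂μ₁ := by
        refine lintegral_congr fun x => ?_
        have hm : Measurable fun pz : ℝ × ℝ => Ψ (pz.1 * g x, pz.2) :=
          hΨ.comp ((measurable_fst.mul measurable_const).prodMk measurable_snd)
        exact (lintegral_prod _ hm.aemeasurable).symm
    _ = ∫⁻ pz, ∫⁻ x, Ψ (pz.1 * g x, pz.2) ∂μ₁ ∂(σ.prod (volume : Measure ℝ)) := by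
        have hm : Measurable fun q : ℝ × (ℝ × ℝ) => Ψ (q.2.1 * g q.1, q.2.2) :=
          hΨ.comp ((measurable_snd.fst.mul (hg.comp measurable_fst)).prodMk
            measurable_snd.snd)
        exact lintegral_lintegral_swap hm.aemeasurable
    _ = 0 := by
        have hz : ∀ pz : ℝ × ℝ, pz.1 ≠ 0 →
            ∫⁻ x, Ψ (pz.1 * g x, pz.2) ∂μ₁ = 0 := by
          intro pz hδ
          have hΨs : Measurable fun u : ℝ => Ψ (pz.1 * u, pz.2) :=
            hΨ.comp ((measurable_const.mul measurable_id).prodMk measurable_const)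
          rw [← lintegral_map hΨs hg]
          have hvol : ∫⁻ u, Ψ (pz.1 * u, pz.2) ∂(volume : Measure ℝ) = 0 := by
            have hker : Measurable fun ub : ℝ × (ℝ × (ℕ → ℝ × ℝ)) =>
                f₀ (pz.1 * ub.1 + snLim g (pz.2, ub.2)) :=
              hf₀.comp ((measurable_const.mul measurable_fst).add
                (hH.comp (measurable_const.prodMk measurable_snd)))
            have hb : ∀ b : ℝ × (ℕ → ℝ × ℝ),
                ∫⁻ u, f₀ (pz.1 * u + snLim g (pz.2, b)) ∂(volume : Measure ℝ) = 0 := by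
              intro b
              set c : ℝ := snLim g (pz.2, b) with hcdef
              have hAc : MeasurableSet ((fun u : ℝ => pz.1 * u + c) ⁻¹' A) :=
                ((measurable_const.mul measurable_id).add_const c) hA
              have h1 : (volume : Measure ℝ) ((fun u : ℝ => pz.1 * u + c) ⁻¹' A) = 0 := by
                have hpre : (fun u : ℝ => pz.1 * u + c) ⁻¹' A
                    = (fun u : ℝ => pz.1 * u) ⁻¹' ((fun v : ℝ => v + c) ⁻¹' A) := rfl
                rw [hpre]
                rw [show (fun u : ℝ => pz.1 * u) = (pz.1 * ·) from rfl,
                  Real.volume_preimage_mul_left hδ]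
                rw [show (fun v : ℝ => v + c) = (· + c) from rfl,
                  measure_preimage_add_right volume c A, hA0, mul_zero]
              calc ∫⁻ u, f₀ (pz.1 * u + c) ∂(volume : Measure ℝ)
                  = (volume : Measure ℝ) ((fun u : ℝ => pz.1 * u + c) ⁻¹' A) := by
                    rw [← lintegral_indicator_one hAc]
                    refine lintegral_congr fun u => ?_
                    by_cases h : pz.1 * u + c ∈ A
                    · simp [hf₀def, Set.indicator_of_mem, h, Set.mem_preimage]
                    · simp [hf₀def, Set.indicator_of_notMem, h, Set.mem_preimage]
                _ = 0 := h1
            calc ∫⁻ u, Ψ (pz.1 * u, pz.2) ∂(volume : Measure ℝ)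
                = ∫⁻ u, ∫⁻ b, f₀ (pz.1 * u + snLim g (pz.2, b)) ∂P₂
                    ∂(volume : Measure ℝ) := by simp only [hΨdef]
              _ = ∫⁻ b, ∫⁻ u, f₀ (pz.1 * u + snLim g (pz.2, b)) ∂(volume : Measure ℝ)
                    ∂P₂ := lintegral_lintegral_swap hker.aemeasurable
              _ = 0 := by simp only [hb, lintegral_zero]
          have hae0 : (fun u : ℝ => Ψ (pz.1 * u, pz.2)) =ᵐ[(volume : Measure ℝ)] 0 :=
            (lintegral_eq_zero_iff hΨs).mp hvol
          have hae1 : (fun u : ℝ => Ψ (pz.1 * u, pz.2)) =ᵐ[μ₁.map g] 0 :=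
            hgac.ae_le hae0
          exact (lintegral_congr_ae hae1).trans lintegral_zero
        have haez : ∀ᵐ pz ∂(σ.prod (volume : Measure ℝ)), pz.1 ≠ (0 : ℝ) := by
          rw [ae_iff]
          have hset : {pz : ℝ × ℝ | ¬ pz.1 ≠ 0} = ({(0 : ℝ)} : Set ℝ) ×ˢ (Set.univ : Set ℝ) := by
            ext pz
            simp only [Set.mem_setOf_eq, not_not, Set.mem_prod, Set.mem_singleton_iff,
              Set.mem_univ, and_true]
          rw [hset, Measure.prod_prod, hσ0, zero_mul]
        have hzero : ∀ᵐ pz ∂(σ.prod (volume : Measure ℝ)),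
            (fun pz : ℝ × ℝ => ∫⁻ x, Ψ (pz.1 * g x, pz.2) ∂μ₁) pz = 0 :=
          haez.mono fun pz h => hz pz h
        exact (lintegral_congr_ae hzero).trans lintegral_zero
end

section
/- Let g : ℝ₊ → ℝ be measurable such that the restriction of λ_{ℝ₊} g^{−1} to ℝ∖{0} is absolutely continuous with respect to Lebesgue measure. Let (Tᵢ) be Poisson jump times and (Δᵢ) i.i.d. real random variables with law σ without atom at 0, independent of (Tᵢ), such that the series I = Σ_{i≥1} Δᵢ g(Tᵢ) converges a.s. Then the restriction of the law of I to ℝ∖{0} is absolutely continuous with respect to Lebesgue measure. -/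
open MeasureTheory ProbabilityTheory Filter
open scoped ENNReal

namespace ShotNoiseAux
open Set



variable {Ω : Type*} [MeasurableSpace Ω]

/-- monotonicity of `Indep` in the σ-algebras. -/
lemma indep_mono {mΩ : MeasurableSpace Ω} {P : Measure Ω}
    {m₁ m₂ m₁' m₂' : MeasurableSpace Ω} (h : Indep m₁ m₂ P)
    (h1 : m₁' ≤ m₁) (h2 : m₂' ≤ m₂) : Indep m₁' m₂' P :=
  fun t1 t2 ht1 ht2 => h t1 t2 (h1 _ ht1) (h2 _ ht2)

lemma indepFun_of_measurable_sup {mΩ : MeasurableSpace Ω} {P : Measure Ω}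
    [IsProbabilityMeasure P] {ι : Type*}
    {K : ι → Ω → ℝ} (hK : ∀ i, Measurable (K i))
    (h : iIndepFun K P)
    {β γ : Type*} [MeasurableSpace β] [MeasurableSpace γ]
    {f : Ω → β} {g : Ω → γ} {S T : Set ι} (hST : Disjoint S T)
    (hf : Measurable[⨆ i ∈ S, MeasurableSpace.comap (K i) inferInstance] f)
    (hg : Measurable[⨆ i ∈ T, MeasurableSpace.comap (K i) inferInstance] g) :
    IndepFun f g P := by
  have h1 : Indep (⨆ i ∈ S, MeasurableSpace.comap (K i) inferInstance)
      (⨆ i ∈ T, MeasurableSpace.comap (K i) inferInstance) P :=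
    indep_iSup_of_disjoint (fun i => (hK i).comap_le) h hST
  exact indep_mono h1 (measurable_iff_comap_le.mp hf) (measurable_iff_comap_le.mp hg)

lemma pi_lambda_meas {α : Type*} (m : MeasurableSpace α) (f : α → ℕ → ℝ)
    (hf : ∀ k, Measurable[m] fun a => f a k) : Measurable[m] f :=
  measurable_pi_lambda f hf

/-- the key null-section lemma from the absolute continuity assumption on `λ g⁻¹`. -/
lemma aux_null {g : ℝ → ℝ} (hg : Measurable g)
    (hgac : (((volume.restrict (Set.Ioi (0:ℝ))).map g).restrict ({0}ᶜ : Set ℝ)) ≪ volume)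
    {A : Set ℝ} (hA : MeasurableSet A) (hA0 : volume A = 0) {c d : ℝ} (hd : d ≠ 0) :
    volume {x : ℝ | 0 < x ∧ (g x ≠ 0 ∧ d * g x + c ∈ A)} = 0 := by
  set B : Set ℝ := (fun u => d * u + c) ⁻¹' A with hB
  have hBm : MeasurableSet B := (measurable_id.const_mul d |>.add_const c) hA
  have hB0 : volume B = 0 := by
    have h1 : B = (fun u => d * u) ⁻¹' ((fun v => v + c) ⁻¹' A) := rfl
    have h2 : volume ((fun v => v + c) ⁻¹' A) = 0 := by
      rw [measure_preimage_add_right volume c A]; exact hA0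
    have h3 : volume ((fun u => d * u) ⁻¹' ((fun v => v + c) ⁻¹' A)) =
        ENNReal.ofReal |d⁻¹| * volume ((fun v => v + c) ⁻¹' A) :=
      Real.volume_preimage_mul_left hd _
    rw [h1, h3, h2, mul_zero]
  have hset : {x : ℝ | 0 < x ∧ (g x ≠ 0 ∧ d * g x + c ∈ A)} =
      Set.Ioi (0:ℝ) ∩ (g ⁻¹' (B ∩ {0}ᶜ)) := by
    ext x
    simp only [Set.mem_setOf_eq, Set.mem_inter_iff, Set.mem_Ioi, Set.mem_preimage,
      Set.mem_compl_iff, Set.mem_singleton_iff, hB]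
    tauto
  rw [hset, Set.inter_comm, ← Measure.restrict_apply (hg (hBm.inter (measurableSet_singleton 0).compl)),
    ← Measure.map_apply hg (hBm.inter (measurableSet_singleton 0).compl)]
  have : ((volume.restrict (Set.Ioi (0:ℝ))).map g) (B ∩ {0}ᶜ) =
      (((volume.restrict (Set.Ioi (0:ℝ))).map g).restrict ({0}ᶜ : Set ℝ)) B := by
    rw [Measure.restrict_apply hBm]
  rw [this]
  exact hgac hB0

/-- if all `s`-sections (in the first variable) of `V` are null then the shear preimage is null. -/
lemma aux_shear {μ ν : Measure ℝ} [IsFiniteMeasure μ] [IsFiniteMeasure ν]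
    (hμ : μ ≪ (volume : Measure ℝ)) (hν : ν ≪ (volume : Measure ℝ))
    {V : Set (ℝ × ℝ)} (hV : MeasurableSet V) (hsec : ∀ s, volume {x : ℝ | (x, s) ∈ V} = 0) :
    (μ.prod ν) {p : ℝ × ℝ | (p.1, p.1 + p.2) ∈ V} = 0 := by
  have hshear : MeasurePreserving (fun p : ℝ × ℝ => (p.1, p.1 + p.2))
      ((volume : Measure ℝ).prod (volume : Measure ℝ))
      ((volume : Measure ℝ).prod (volume : Measure ℝ)) := by
    refine (MeasurePreserving.id (volume : Measure ℝ)).skew_product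
      (measurable_fst.add measurable_snd) (Filter.Eventually.of_forall fun x => ?_)
    exact map_add_left_eq_self volume x
  have hvol : ((volume : Measure ℝ).prod (volume : Measure ℝ)) V = 0 := by
    rw [Measure.prod_apply_symm hV]
    have : (fun s => volume ((fun x => (x, s)) ⁻¹' V)) = fun s => (0 : ℝ≥0∞) := by
      funext s; exact hsec s
    rw [this, lintegral_zero]
  have hvol2 : ((volume : Measure ℝ).prod (volume : Measure ℝ))
      {p : ℝ × ℝ | (p.1, p.1 + p.2) ∈ V} = 0 := by
    have := hshear.measure_preimage hV.nullMeasurableSet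
    exact this.trans hvol
  exact (hμ.prod hν) hvol2

/-- sum of two independent real random variables, one with a.c. law, has a.c. law. -/
lemma aux_conv {μ ν : Measure ℝ} [SFinite μ] [SFinite ν] (hμ : μ ≪ (volume : Measure ℝ)) :
    (μ.prod ν).map (fun p : ℝ × ℝ => p.1 + p.2) ≪ (volume : Measure ℝ) := by
  refine Measure.AbsolutelyContinuous.mk (fun s hs hs0 => ?_)
  rw [Measure.map_apply (f := fun p : ℝ × ℝ => p.1 + p.2) (measurable_fst.add measurable_snd) hs]
  have hsm : MeasurableSet {p : ℝ × ℝ | p.1 + p.2 ∈ s} := (measurable_fst.add measurable_snd) hs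
  rw [show (fun p : ℝ × ℝ => p.1 + p.2) ⁻¹' s = {p : ℝ × ℝ | p.1 + p.2 ∈ s} from rfl,
    Measure.prod_apply_symm hsm]
  have : ∀ y : ℝ, μ ((fun x => (x, y)) ⁻¹' {p : ℝ × ℝ | p.1 + p.2 ∈ s}) = 0 := by
    intro y
    have : ((fun x => (x, y)) ⁻¹' {p : ℝ × ℝ | p.1 + p.2 ∈ s}) = (fun x => x + y) ⁻¹' s := rfl
    rw [this]
    refine hμ ?_
    rw [measure_preimage_add_right volume y s]; exact hs0
  simp only [this, lintegral_zero]




lemma expMeasure_ac (α : ℝ) : expMeasure α ≪ (volume : Measure ℝ) := by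
  rw [expMeasure, gammaMeasure]
  exact withDensity_absolutelyContinuous _ _

lemma expMeasure_Iic (α : ℝ) : expMeasure α (Set.Iic (0:ℝ)) = 0 := by
  have h1 : expMeasure α (Set.Iio (0:ℝ)) = 0 := by
    rw [expMeasure, gammaMeasure, withDensity_apply _ measurableSet_Iio]
    exact lintegral_gammaPDF_of_nonpos le_rfl
  have h2 : expMeasure α ({(0:ℝ)}) = 0 :=
    expMeasure_ac α (by simp)
  have : Set.Iic (0:ℝ) = Set.Iio 0 ∪ {0} := by
    ext x; simp [le_iff_lt_or_eq]
  rw [this]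
  exact le_antisymm ((measure_union_le _ _).trans (by simp [h1, h2])) (zero_le)

/-- tail sum function: robust measurable version of the limit of partial sums. -/
noncomputable def tailSum (g : ℝ → ℝ) (s : ℝ) (w : (ℕ → ℝ) × (ℕ → ℝ)) : ℝ :=
  (Filter.liminf
    (fun m => ((∑ k ∈ Finset.range m, w.2 k * g (s + ∑ j ∈ Finset.range k, w.1 j) : ℝ) : EReal))
    Filter.atTop).toReal

lemma measurable_tailSum {g : ℝ → ℝ} (hg : Measurable g) :
    Measurable (fun p : ℝ × ((ℕ → ℝ) × (ℕ → ℝ)) => tailSum g p.1 p.2) := by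
  apply Measurable.ereal_toReal
  apply Measurable.liminf
  intro m
  apply Measurable.coe_real_ereal
  apply Finset.measurable_sum
  intro k _
  apply Measurable.mul
  · exact (measurable_pi_apply k).comp (measurable_snd.comp measurable_snd)
  · apply hg.comp
    apply measurable_fst.add
    apply Finset.measurable_sum
    intro j _
    exact (measurable_pi_apply j).comp (measurable_fst.comp measurable_snd)

lemma tailSum_eq {g : ℝ → ℝ} {s : ℝ} {w : (ℕ → ℝ) × (ℕ → ℝ)} {L : ℝ}
    (h : Tendsto (fun m => ∑ k ∈ Finset.range m, w.2 k * g (s + ∑ j ∈ Finset.range k, w.1 j))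
      atTop (nhds L)) : tailSum g s w = L := by
  have h2 : Tendsto
      (fun m => ((∑ k ∈ Finset.range m, w.2 k * g (s + ∑ j ∈ Finset.range k, w.1 j) : ℝ) : EReal))
      atTop (nhds (L : EReal)) := (continuous_coe_real_ereal.tendsto L).comp h
  rw [tailSum, h2.liminf_eq, EReal.toReal_coe]




lemma doubled_indep {Ω : Type*} [MeasurableSpace Ω] {P : Measure Ω} [IsProbabilityMeasure P]
    {E Δ : ℕ → Ω → ℝ} (hE : ∀ j, Measurable (E j)) (hΔ : ∀ j, Measurable (Δ j))
    (hindep : iIndepFun (fun j ω => (E j ω, Δ j ω)) P)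
    (hpair : ∀ j, IndepFun (E j) (Δ j) P) :
    iIndepFun (Sum.elim E Δ) P := by
  rw [iIndepFun_iff_measure_inter_preimage_eq_mul]
  intro S sets hsets
  classical
  set J : Finset ℕ := S.image (Sum.elim id id) with hJ
  set setsE : ℕ → Set ℝ := fun j => if Sum.inl j ∈ S then sets (Sum.inl j) else Set.univ
    with hsetsE
  set setsΔ : ℕ → Set ℝ := fun j => if Sum.inr j ∈ S then sets (Sum.inr j) else Set.univ
    with hsetsΔ
  have hsetsEm : ∀ j, MeasurableSet (setsE j) := by
    intro j; rw [hsetsE]; dsimp only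
    split_ifs with h
    · exact hsets _ h
    · exact MeasurableSet.univ
  have hsetsΔm : ∀ j, MeasurableSet (setsΔ j) := by
    intro j; rw [hsetsΔ]; dsimp only
    split_ifs with h
    · exact hsets _ h
    · exact MeasurableSet.univ
  -- Step A : rewrite intersection
  have stepA : (⋂ i ∈ S, Sum.elim E Δ i ⁻¹' sets i) =
      ⋂ j ∈ J, (fun ω => (E j ω, Δ j ω)) ⁻¹' (setsE j ×ˢ setsΔ j) := by
    ext ω
    simp only [Set.mem_iInter, Set.mem_preimage, Set.mem_prod]
    constructor
    · intro h j hj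
      constructor
      · rw [hsetsE]; dsimp only
        split_ifs with hmem
        · exact h (Sum.inl j) hmem
        · trivial
      · rw [hsetsΔ]; dsimp only
        split_ifs with hmem
        · exact h (Sum.inr j) hmem
        · trivial
    · intro h i hi
      cases i with
      | inl j =>
        have hjJ : j ∈ J := Finset.mem_image.mpr ⟨Sum.inl j, hi, rfl⟩
        have := (h j hjJ).1
        rw [hsetsE] at this; dsimp only at this
        rw [if_pos hi] at this
        exact this
      | inr j =>
        have hjJ : j ∈ J := Finset.mem_image.mpr ⟨Sum.inr j, hi, rfl⟩
        have := (h j hjJ).2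
        rw [hsetsΔ] at this; dsimp only at this
        rw [if_pos hi] at this
        exact this
  -- Step B : independence of the pairs
  have stepB : P (⋂ j ∈ J, (fun ω => (E j ω, Δ j ω)) ⁻¹' (setsE j ×ˢ setsΔ j)) =
      ∏ j ∈ J, P ((fun ω => (E j ω, Δ j ω)) ⁻¹' (setsE j ×ˢ setsΔ j)) :=
    hindep.measure_inter_preimage_eq_mul J (fun j _ => (hsetsEm j).prod (hsetsΔm j))
  -- Step C : split each pair probability
  have stepC : ∀ j, P ((fun ω => (E j ω, Δ j ω)) ⁻¹' (setsE j ×ˢ setsΔ j)) =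
      P (E j ⁻¹' setsE j) * P (Δ j ⁻¹' setsΔ j) := by
    intro j
    have hpre : ((fun ω => (E j ω, Δ j ω)) ⁻¹' (setsE j ×ˢ setsΔ j)) =
        E j ⁻¹' setsE j ∩ Δ j ⁻¹' setsΔ j := by
      ext ω; simp [Set.mem_prod]
    rw [hpre]
    exact (hpair j).measure_inter_preimage_eq_mul _ _ (hsetsEm j) (hsetsΔm j)
  -- Step D : final product identity
  have hEfac : ∀ j, P (E j ⁻¹' setsE j) =
      (if Sum.inl j ∈ S then P (Sum.elim E Δ (Sum.inl j) ⁻¹' sets (Sum.inl j)) else 1) := by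
    intro j
    rw [hsetsE]; dsimp only
    split_ifs with h
    · rfl
    · simp
  have hΔfac : ∀ j, P (Δ j ⁻¹' setsΔ j) =
      (if Sum.inr j ∈ S then P (Sum.elim E Δ (Sum.inr j) ⁻¹' sets (Sum.inr j)) else 1) := by
    intro j
    rw [hsetsΔ]; dsimp only
    split_ifs with h
    · rfl
    · simp
  rw [stepA, stepB]
  simp_rw [stepC]
  rw [Finset.prod_mul_distrib]
  simp_rw [hEfac, hΔfac]
  rw [← Finset.prod_filter, ← Finset.prod_filter]
  -- now : ∏ j ∈ J.filter (inl · ∈ S), P(...) * ∏ j ∈ J.filter (inr · ∈ S), P(...) = ∏ i ∈ S, ...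
  have hleft : J.filter (fun j => Sum.inl j ∈ S) = (S.filter (fun i => i.isLeft)).image
      (Sum.elim id id) := by
    ext j
    simp only [Finset.mem_filter, Finset.mem_image, hJ]
    constructor
    · rintro ⟨-, hmem⟩
      exact ⟨Sum.inl j, ⟨hmem, rfl⟩, rfl⟩
    · rintro ⟨i, ⟨hiS, hleft⟩, rfl⟩
      cases i with
      | inl a => exact ⟨⟨Sum.inl a, hiS, rfl⟩, hiS⟩
      | inr a => simp at hleft
  have hright : J.filter (fun j => Sum.inr j ∈ S) = (S.filter (fun i => i.isRight)).image
      (Sum.elim id id) := by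
    ext j
    simp only [Finset.mem_filter, Finset.mem_image, hJ]
    constructor
    · rintro ⟨-, hmem⟩
      exact ⟨Sum.inr j, ⟨hmem, rfl⟩, rfl⟩
    · rintro ⟨i, ⟨hiS, hright⟩, rfl⟩
      cases i with
      | inl a => simp at hright
      | inr a => exact ⟨⟨Sum.inr a, hiS, rfl⟩, hiS⟩
  rw [hleft, hright]
  rw [Finset.prod_image (by
    rintro x hx y hy hxy
    simp only [Finset.mem_coe, Finset.mem_filter] at hx hy
    cases x with
    | inl a => cases y with
      | inl b => simpa using hxy
      | inr b => simp at hy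
    | inr a => simp at hx)]
  rw [Finset.prod_image (by
    rintro x hx y hy hxy
    simp only [Finset.mem_coe, Finset.mem_filter] at hx hy
    cases x with
    | inr a => cases y with
      | inr b => simpa using hxy
      | inl b => simp at hy
    | inl a => simp at hx)]
  have congr1 : ∀ i ∈ S.filter (fun i : ℕ ⊕ ℕ => i.isLeft),
      P (Sum.elim E Δ (Sum.inl (Sum.elim id id i)) ⁻¹' sets (Sum.inl (Sum.elim id id i))) =
      P (Sum.elim E Δ i ⁻¹' sets i) := by
    rintro (a | a) hi
    · rfl
    · simp at hi
  have congr2 : ∀ i ∈ S.filter (fun i : ℕ ⊕ ℕ => i.isRight),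
      P (Sum.elim E Δ (Sum.inr (Sum.elim id id i)) ⁻¹' sets (Sum.inr (Sum.elim id id i))) =
      P (Sum.elim E Δ i ⁻¹' sets i) := by
    rintro (a | a) hi
    · simp at hi
    · rfl
  rw [Finset.prod_congr rfl congr1, Finset.prod_congr rfl congr2]
  have hfilt : S.filter (fun i : ℕ ⊕ ℕ => i.isRight = true) =
      S.filter (fun i : ℕ ⊕ ℕ => ¬ i.isLeft = true) := by
    apply Finset.filter_congr
    rintro (a | a) _ <;> simp
  rw [hfilt, Finset.prod_filter_mul_prod_filter_not]

end ShotNoiseAux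

open MeasureTheory ProbabilityTheory Filter
open scoped ENNReal

/-- If the restriction to `ℝ∖{0}` of the pushforward `λ_{ℝ₊} g⁻¹` is absolutely continuous
with respect to Lebesgue measure, then the restriction to `ℝ∖{0}` of the law of the shot
noise series `I = Σᵢ Δᵢ g(Tᵢ)` is absolutely continuous with respect to Lebesgue measure
(the law may have an atom at `0`). -/
theorem shotNoise_linear_law_restrict_absolutelyContinuous {Ω : Type*} [MeasurableSpace Ω]
    (P : Measure Ω) [IsProbabilityMeasure P] (α : ℝ) (hα : 0 < α)
    (E : ℕ → Ω → ℝ) (Δ : ℕ → Ω → ℝ)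
    (hE : ∀ j, Measurable (E j)) (hΔ : ∀ j, Measurable (Δ j))
    (σ : Measure ℝ) [IsProbabilityMeasure σ] (hσ0 : σ {0} = 0)
    (hindep : iIndepFun (fun j ω => (E j ω, Δ j ω)) P)
    (hlaw : ∀ j, P.map (fun ω => (E j ω, Δ j ω)) = (expMeasure α).prod σ)
    (g : ℝ → ℝ) (hg : Measurable g)
    (hgac : (((volume.restrict (Set.Ioi (0 : ℝ))).map g).restrict ({0}ᶜ : Set ℝ))
        ≪ (volume : Measure ℝ))
    (I : Ω → ℝ) (hI : Measurable I)
    (hconv : ∀ᵐ ω ∂P,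
      Tendsto (fun n => ∑ i ∈ Finset.range n, Δ i ω * g (jumpTime E (i + 1) ω))
        atTop (nhds (I ω))) :
    (P.map I).restrict ({0}ᶜ : Set ℝ) ≪ (volume : Measure ℝ) := by
  classical
  have hT : ∀ i, Measurable (fun ω => jumpTime E i ω) := by
    intro i
    simp only [jumpTime]
    exact Finset.measurable_sum _ (fun j _ => hE j)
  have hpairm : ∀ j, Measurable (fun ω => (E j ω, Δ j ω)) := fun j => (hE j).prodMk (hΔ j)
  haveI hexpP : IsProbabilityMeasure (expMeasure α) := isProbabilityMeasure_expMeasure hα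
  have hmapE : ∀ j, P.map (E j) = expMeasure α := by
    intro j
    have h1 : P.map (E j) = (P.map (fun ω => (E j ω, Δ j ω))).map Prod.fst := by
      rw [Measure.map_map measurable_fst (hpairm j)]
      rfl
    rw [h1, hlaw j, Measure.map_fst_prod, measure_univ, one_smul]
  have hmapΔ : ∀ j, P.map (Δ j) = σ := by
    intro j
    have h1 : P.map (Δ j) = (P.map (fun ω => (E j ω, Δ j ω))).map Prod.snd := by
      rw [Measure.map_map measurable_snd (hpairm j)]
      rfl
    rw [h1, hlaw j, Measure.map_snd_prod, measure_univ, one_smul]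
  have hpairindep : ∀ j, IndepFun (E j) (Δ j) P := by
    intro j
    rw [indepFun_iff_map_prod_eq_prod_map_map (hE j).aemeasurable (hΔ j).aemeasurable,
      hlaw j, hmapE j, hmapΔ j]
  have hdoubled : iIndepFun (Sum.elim E Δ) P :=
    ShotNoiseAux.doubled_indep hE hΔ hindep hpairindep
  have hK : ∀ i : ℕ ⊕ ℕ, Measurable (Sum.elim E Δ i) := by
    rintro (j | j)
    · exact hE j
    · exact hΔ j
  have hbase : ∀ (U : Set (ℕ ⊕ ℕ)) (i : ℕ ⊕ ℕ), i ∈ U →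
      Measurable[⨆ i ∈ U, MeasurableSpace.comap (Sum.elim E Δ i) inferInstance]
        (Sum.elim E Δ i) :=
    fun U i hi => measurable_iff_comap_le.mpr
      (le_biSup (fun i : ℕ ⊕ ℕ => MeasurableSpace.comap (Sum.elim E Δ i) inferInstance) hi)
  -- basic null sets
  have hE0 : ∀ j, P {ω | E j ω ≤ 0} = 0 := by
    intro j
    have h1 : {ω | E j ω ≤ 0} = E j ⁻¹' (Set.Iic 0) := rfl
    rw [h1, ← Measure.map_apply (hE j) measurableSet_Iic, hmapE j]
    exact ShotNoiseAux.expMeasure_Iic α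
  have hΔ0 : ∀ j, P {ω | Δ j ω = 0} = 0 := by
    intro j
    have h1 : {ω | Δ j ω = 0} = Δ j ⁻¹' {0} := rfl
    rw [h1, ← Measure.map_apply (hΔ j) (measurableSet_singleton 0), hmapΔ j]
    exact hσ0
  have hTpos : ∀ n, P {ω | ¬ 0 < jumpTime E (n + 1) ω} = 0 := by
    intro n
    have hsub : {ω | ¬ 0 < jumpTime E (n + 1) ω} ⊆ ⋃ j, {ω | E j ω ≤ 0} := by
      intro ω hω
      simp only [Set.mem_setOf_eq, not_lt] at hω
      by_contra hc
      simp only [Set.mem_iUnion, Set.mem_setOf_eq, not_exists, not_le] at hc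
      have hpos : 0 < jumpTime E (n + 1) ω := by
        simp only [jumpTime]
        exact Finset.sum_pos (fun j _ => hc j) (by simp)
      exact absurd (lt_of_lt_of_le hpos hω) (lt_irrefl 0)
    exact measure_mono_null hsub (measure_iUnion_null (fun j => hE0 j))
  have hconvnull : P {ω | ¬ Tendsto
      (fun n => ∑ i ∈ Finset.range n, Δ i ω * g (jumpTime E (i + 1) ω))
      atTop (nhds (I ω))} = 0 := ae_iff.mp hconv
  -- absolutely continuous law of the jump times
  have hμX : ∀ n, P.map (fun ω => jumpTime E (n + 1) ω) ≪ (volume : Measure ℝ) := by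
    intro n
    set rest : Ω → ℝ := fun ω => ∑ j ∈ Finset.range n, E (j + 1) ω with hrest
    have hrestm : Measurable rest := Finset.measurable_sum _ (fun j _ => hE (j + 1))
    have hindepX : IndepFun (E 0) rest P := by
      apply ShotNoiseAux.indepFun_of_measurable_sup hK hdoubled
        (S := {Sum.inl 0}) (T := Sum.inl '' (Set.Ici 1))
      · rw [Set.disjoint_left]
        rintro x hx ⟨j, hj, rfl⟩
        simp only [Set.mem_singleton_iff, Sum.inl.injEq] at hx
        simp only [Set.mem_Ici] at hj
        omega
      · exact hbase {Sum.inl 0} (Sum.inl 0) rfl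
      · apply Finset.measurable_sum
        intro j _
        exact hbase (Sum.inl '' (Set.Ici 1)) (Sum.inl (j + 1))
          ⟨j + 1, Set.mem_Ici.mpr (by omega), rfl⟩
    have hXrw : (fun ω => jumpTime E (n + 1) ω) =
        (fun p : ℝ × ℝ => p.1 + p.2) ∘ (fun ω => (E 0 ω, rest ω)) := by
      funext ω
      simp only [Function.comp_apply, hrest, jumpTime]
      rw [Finset.sum_range_succ']
      ring
    rw [hXrw, ← Measure.map_map (g := fun p : ℝ × ℝ => p.1 + p.2) (measurable_fst.add measurable_snd) ((hE 0).prodMk hrestm)]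
    have hprodlaw : P.map (fun ω => (E 0 ω, rest ω)) = (expMeasure α).prod (P.map rest) := by
      rw [← hmapE 0]
      exact (indepFun_iff_map_prod_eq_prod_map_map (hE 0).aemeasurable
        hrestm.aemeasurable).mp hindepX
    rw [hprodlaw]
    haveI : IsProbabilityMeasure (P.map rest) := Measure.isProbabilityMeasure_map hrestm.aemeasurable
    exact ShotNoiseAux.aux_conv (ShotNoiseAux.expMeasure_ac α)
  -- joint law of (T (n+1), E (n+1))
  have hXYlaw : ∀ n, P.map (fun ω => (jumpTime E (n + 1) ω, E (n + 1) ω)) =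
      (P.map (fun ω => jumpTime E (n + 1) ω)).prod (expMeasure α) := by
    intro n
    have hindepXY : IndepFun (fun ω => jumpTime E (n + 1) ω) (E (n + 1)) P := by
      apply ShotNoiseAux.indepFun_of_measurable_sup hK hdoubled
        (S := Sum.inl '' (Set.Iic n)) (T := {Sum.inl (n + 1)})
      · rw [Set.disjoint_left]
        rintro x ⟨j, hj, rfl⟩ hx
        rw [Set.mem_singleton_iff] at hx
        simp only [Sum.inl.injEq] at hx
        simp only [Set.mem_Iic] at hj
        omega
      · have hXm : Measurable[⨆ i ∈ (Sum.inl '' (Set.Iic n) : Set (ℕ ⊕ ℕ)),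
            MeasurableSpace.comap (Sum.elim E Δ i) inferInstance]
            (fun ω => ∑ j ∈ Finset.range (n + 1), E j ω) := by
          apply Finset.measurable_sum
          intro j hj
          have hj' := Finset.mem_range.mp hj
          exact hbase (Sum.inl '' (Set.Iic n)) (Sum.inl j)
            ⟨j, Set.mem_Iic.mpr (by omega), rfl⟩
        exact hXm
      · exact hbase {Sum.inl (n + 1)} (Sum.inl (n + 1)) rfl
    rw [← hmapE (n + 1)]
    exact (indepFun_iff_map_prod_eq_prod_map_map (hT (n + 1)).aemeasurable
      (hE (n + 1)).aemeasurable).mp hindepXY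
  -- the tail data
  set W : ℕ → Ω → ℝ × ((ℕ → ℝ) × (ℕ → ℝ)) :=
    fun n ω => (Δ n ω, (fun k => E (n + 2 + k) ω, fun k => Δ (n + 1 + k) ω)) with hW
  have hWm : ∀ n, Measurable (W n) := fun n =>
    (hΔ n).prodMk ((measurable_pi_lambda _ (fun k => hE (n + 2 + k))).prodMk
      (measurable_pi_lambda _ (fun k => hΔ (n + 1 + k))))
  have hindepXYW : ∀ n, IndepFun (fun ω => (jumpTime E (n + 1) ω, E (n + 1) ω)) (W n) P := by
    intro n
    apply ShotNoiseAux.indepFun_of_measurable_sup hK hdoubled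
      (S := Sum.inl '' (Set.Iic (n + 1)))
      (T := Sum.inl '' (Set.Ici (n + 2)) ∪ Set.range Sum.inr)
    · rw [Set.disjoint_left]
      rintro x ⟨j, hj, rfl⟩ (⟨j', hj', heq⟩ | ⟨j', heq⟩)
      · simp only [Sum.inl.injEq] at heq
        simp only [Set.mem_Iic] at hj
        simp only [Set.mem_Ici] at hj'
        omega
      · exact Sum.inl_ne_inr heq.symm
    · apply Measurable.prodMk
      · have hXm : Measurable[⨆ i ∈ (Sum.inl '' (Set.Iic (n + 1)) : Set (ℕ ⊕ ℕ)),
            MeasurableSpace.comap (Sum.elim E Δ i) inferInstance]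
            (fun ω => ∑ j ∈ Finset.range (n + 1), E j ω) := by
          apply Finset.measurable_sum
          intro j hj
          have hj' := Finset.mem_range.mp hj
          exact hbase (Sum.inl '' (Set.Iic (n + 1))) (Sum.inl j)
            ⟨j, Set.mem_Iic.mpr (by omega), rfl⟩
        exact hXm
      · exact hbase (Sum.inl '' (Set.Iic (n + 1))) (Sum.inl (n + 1))
          ⟨n + 1, Set.mem_Iic.mpr le_rfl, rfl⟩
    · apply Measurable.prodMk
      · exact hbase _ (Sum.inr n) (Or.inr ⟨n, rfl⟩)
      · apply Measurable.prodMk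
        · exact ShotNoiseAux.pi_lambda_meas _ _ (fun k => hbase _ (Sum.inl (n + 2 + k))
            (Or.inl ⟨n + 2 + k, Set.mem_Ici.mpr (by omega), rfl⟩))
        · exact ShotNoiseAux.pi_lambda_meas _ _ (fun k => hbase _ (Sum.inr (n + 1 + k))
            (Or.inr ⟨n + 1 + k, rfl⟩))
  -- reduce to a null set computation
  refine Measure.AbsolutelyContinuous.mk (fun s hs hs0 => ?_)
  rw [Measure.restrict_apply hs,
    Measure.map_apply hI (hs.inter (measurableSet_singleton (0 : ℝ)).compl)]
  set A : Set ℝ := s ∩ {0}ᶜ with hAdef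
  have hA : MeasurableSet A := hs.inter (measurableSet_singleton 0).compl
  have hA0 : volume A = 0 := measure_mono_null Set.inter_subset_left hs0
  have h0A : (0 : ℝ) ∉ A := fun h => h.2 rfl
  -- remainder terms
  set R : ℕ → Ω → ℝ :=
    fun m ω => I ω - ∑ i ∈ Finset.range m, Δ i ω * g (jumpTime E (i + 1) ω) with hRdef
  have hRstep : ∀ m ω, R (m + 1) ω = R m ω - Δ m ω * g (jumpTime E (m + 1) ω) := by
    intro m ω
    simp only [hRdef]
    rw [Finset.sum_range_succ]
    ring
  -- the key lemma : each step event is null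
  have keyG : ∀ n, P {ω | g (jumpTime E (n + 1) ω) ≠ 0 ∧
      Δ n ω * g (jumpTime E (n + 1) ω) + R (n + 1) ω ∈ A} = 0 := by
    intro n
    set U : Set ((ℝ × ℝ) × (ℝ × ((ℕ → ℝ) × (ℕ → ℝ)))) :=
      {q | 0 < q.1.1 ∧ (g q.1.1 ≠ 0 ∧ (q.2.1 ≠ 0 ∧
        q.2.1 * g q.1.1 + ShotNoiseAux.tailSum g (q.1.1 + q.1.2) q.2.2 ∈ A))} with hUdef
    have m1 : Measurable (fun q : (ℝ × ℝ) × (ℝ × ((ℕ → ℝ) × (ℕ → ℝ))) => q.1.1) :=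
      measurable_fst.fst
    have m2 : Measurable (fun q : (ℝ × ℝ) × (ℝ × ((ℕ → ℝ) × (ℕ → ℝ))) => q.1.2) :=
      measurable_fst.snd
    have m3 : Measurable (fun q : (ℝ × ℝ) × (ℝ × ((ℕ → ℝ) × (ℕ → ℝ))) => q.2.1) :=
      measurable_snd.fst
    have m4 : Measurable (fun q : (ℝ × ℝ) × (ℝ × ((ℕ → ℝ) × (ℕ → ℝ))) => q.2.2) :=
      measurable_snd.snd
    have hUm : MeasurableSet U := by
      rw [hUdef]
      simp only [Set.setOf_and]
      refine MeasurableSet.inter ?_ (MeasurableSet.inter ?_ (MeasurableSet.inter ?_ ?_))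
      · exact measurableSet_lt measurable_const m1
      · exact (hg.comp m1) (measurableSet_singleton 0).compl
      · exact m3 (measurableSet_singleton 0).compl
      · exact ((m3.mul (hg.comp m1)).add
          ((ShotNoiseAux.measurable_tailSum hg).comp ((m1.add m2).prodMk m4))) hA
    set Φ : Ω → (ℝ × ℝ) × (ℝ × ((ℕ → ℝ) × (ℕ → ℝ))) :=
      fun ω => ((jumpTime E (n + 1) ω, E (n + 1) ω), W n ω) with hΦ
    have hΦm : Measurable Φ := ((hT (n + 1)).prodMk (hE (n + 1))).prodMk (hWm n)
    -- inclusion into the good event plus null sets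
    have hsub : {ω | g (jumpTime E (n + 1) ω) ≠ 0 ∧
        Δ n ω * g (jumpTime E (n + 1) ω) + R (n + 1) ω ∈ A} ⊆
        (Φ ⁻¹' U) ∪ ({ω | ¬ 0 < jumpTime E (n + 1) ω} ∪ ({ω | Δ n ω = 0} ∪
          {ω | ¬ Tendsto (fun m => ∑ i ∈ Finset.range m, Δ i ω * g (jumpTime E (i + 1) ω))
            atTop (nhds (I ω))})) := by
      intro ω hω
      by_cases h1 : 0 < jumpTime E (n + 1) ω
      swap
      · exact Or.inr (Or.inl h1)
      by_cases h2 : Δ n ω = 0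
      · exact Or.inr (Or.inr (Or.inl h2))
      by_cases h3 : Tendsto (fun m => ∑ i ∈ Finset.range m, Δ i ω * g (jumpTime E (i + 1) ω))
          atTop (nhds (I ω))
      swap
      · exact Or.inr (Or.inr (Or.inr h3))
      left
      obtain ⟨hgne, hmem⟩ := hω
      -- the tail sum identity
      have hterm : ∀ k, (jumpTime E (n + 1) ω + E (n + 1) ω) +
          ∑ j ∈ Finset.range k, E (n + 2 + j) ω = jumpTime E (n + 2 + k) ω := by
        intro k
        have h5 : jumpTime E (n + 2 + k) ω =
            jumpTime E (n + 2) ω + ∑ j ∈ Finset.range k, E (n + 2 + j) ω := by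
          simp only [jumpTime]
          exact Finset.sum_range_add (fun j => E j ω) (n + 2) k
        have h6 : jumpTime E (n + 2) ω = jumpTime E (n + 1) ω + E (n + 1) ω := by
          simp only [jumpTime]
          exact Finset.sum_range_succ (fun j => E j ω) (n + 1)
        rw [h5, h6]
      have hidx : ∀ k, n + 1 + k + 1 = n + 2 + k := by omega
      have hsum : ∀ m, ∑ k ∈ Finset.range m, Δ (n + 1 + k) ω * g (jumpTime E (n + 2 + k) ω)
          = (∑ i ∈ Finset.range (n + 1 + m), Δ i ω * g (jumpTime E (i + 1) ω)) -
            ∑ i ∈ Finset.range (n + 1), Δ i ω * g (jumpTime E (i + 1) ω) := by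
        intro m
        rw [Finset.sum_range_add (f := fun i => Δ i ω * g (jumpTime E (i + 1) ω)) (n + 1) m]
        simp only [hidx]
        rw [add_sub_cancel_left]
      have htendpartial : Tendsto
          (fun m => ∑ i ∈ Finset.range (n + 1 + m), Δ i ω * g (jumpTime E (i + 1) ω))
          atTop (nhds (I ω)) := by
        have h4 := h3.comp (tendsto_add_atTop_nat (n + 1))
        have heq : ((fun m => ∑ i ∈ Finset.range m, Δ i ω * g (jumpTime E (i + 1) ω)) ∘
            (fun m => m + (n + 1))) =
            fun m => ∑ i ∈ Finset.range (n + 1 + m), Δ i ω * g (jumpTime E (i + 1) ω) := by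
          funext m
          simp only [Function.comp_apply, Nat.add_comm]
        rwa [heq] at h4
      have key : Tendsto
          (fun m => ∑ k ∈ Finset.range m, Δ (n + 1 + k) ω * g (jumpTime E (n + 2 + k) ω))
          atTop (nhds (R (n + 1) ω)) := by
        have h4 := htendpartial.sub_const
          (∑ i ∈ Finset.range (n + 1), Δ i ω * g (jumpTime E (i + 1) ω))
        have heqf : (fun m =>
            (∑ i ∈ Finset.range (n + 1 + m), Δ i ω * g (jumpTime E (i + 1) ω)) -
            ∑ i ∈ Finset.range (n + 1), Δ i ω * g (jumpTime E (i + 1) ω)) =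
            fun m => ∑ k ∈ Finset.range m, Δ (n + 1 + k) ω * g (jumpTime E (n + 2 + k) ω) := by
          funext m
          rw [hsum m]
        rwa [heqf] at h4
      have htail : ShotNoiseAux.tailSum g (jumpTime E (n + 1) ω + E (n + 1) ω)
          ((fun k => E (n + 2 + k) ω), (fun k => Δ (n + 1 + k) ω)) = R (n + 1) ω := by
        apply ShotNoiseAux.tailSum_eq
        dsimp only
        simp only [hterm]
        exact key
      show Φ ω ∈ U
      rw [hUdef]
      refine ⟨h1, hgne, h2, ?_⟩
      show Δ n ω * g (jumpTime E (n + 1) ω) + ShotNoiseAux.tailSum g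
        (jumpTime E (n + 1) ω + E (n + 1) ω)
        ((fun k => E (n + 2 + k) ω), (fun k => Δ (n + 1 + k) ω)) ∈ A
      rw [htail]
      exact hmem
    -- the good event is null
    have hPU : P (Φ ⁻¹' U) = 0 := by
      haveI : IsProbabilityMeasure (P.map (fun ω => jumpTime E (n + 1) ω)) :=
        Measure.isProbabilityMeasure_map (hT (n + 1)).aemeasurable
      haveI : IsProbabilityMeasure (P.map (W n)) :=
        Measure.isProbabilityMeasure_map (hWm n).aemeasurable
      have hmapΦ : P.map Φ =
          (P.map (fun ω => (jumpTime E (n + 1) ω, E (n + 1) ω))).prod (P.map (W n)) :=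
        (indepFun_iff_map_prod_eq_prod_map_map
          ((hT (n + 1)).prodMk (hE (n + 1))).aemeasurable (hWm n).aemeasurable).mp
          (hindepXYW n)
      rw [← Measure.map_apply hΦm hUm, hmapΦ, hXYlaw n, Measure.prod_apply_symm hUm]
      have hzero : ∀ w : ℝ × ((ℕ → ℝ) × (ℕ → ℝ)),
          ((P.map (fun ω => jumpTime E (n + 1) ω)).prod (expMeasure α))
            ((fun p : ℝ × ℝ => (p, w)) ⁻¹' U) = 0 := by
        intro w
        rcases eq_or_ne w.1 0 with hw | hw
        · have hempty : ((fun p : ℝ × ℝ => (p, w)) ⁻¹' U) = ∅ := by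
            ext p
            simp only [hUdef, Set.mem_preimage, Set.mem_setOf_eq, Set.mem_empty_iff_false,
              iff_false, not_and]
            intro _ _ hne
            exact absurd hw hne
          rw [hempty]
          simp
        · set V : Set (ℝ × ℝ) :=
            {q | 0 < q.1 ∧ (g q.1 ≠ 0 ∧
              w.1 * g q.1 + ShotNoiseAux.tailSum g q.2 w.2 ∈ A)} with hV
          have hVm : MeasurableSet V := by
            rw [hV]
            simp only [Set.setOf_and]
            refine MeasurableSet.inter ?_ (MeasurableSet.inter ?_ ?_)
            · exact measurableSet_lt measurable_const measurable_fst
            · exact (hg.comp measurable_fst) (measurableSet_singleton 0).compl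
            · exact (((measurable_const.mul (hg.comp measurable_fst)).add
                (((ShotNoiseAux.measurable_tailSum hg).comp
                  (measurable_snd.prodMk measurable_const))))) hA
          have hsec : ((fun p : ℝ × ℝ => (p, w)) ⁻¹' U) =
              {p : ℝ × ℝ | (p.1, p.1 + p.2) ∈ V} := by
            ext p
            simp only [hUdef, hV, Set.mem_preimage, Set.mem_setOf_eq]
            constructor
            · rintro ⟨a, b, _, c⟩
              exact ⟨a, b, c⟩
            · rintro ⟨a, b, c⟩
              exact ⟨a, b, hw, c⟩
          rw [hsec]
          haveI : IsProbabilityMeasure (P.map (fun ω => jumpTime E (n + 1) ω)) :=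
            Measure.isProbabilityMeasure_map (hT (n + 1)).aemeasurable
          refine ShotNoiseAux.aux_shear (hμX n) (ShotNoiseAux.expMeasure_ac α) hVm
            (fun s' => ?_)
          have h7 : {x : ℝ | (x, s') ∈ V} = {x : ℝ | 0 < x ∧ (g x ≠ 0 ∧
              w.1 * g x + ShotNoiseAux.tailSum g s' w.2 ∈ A)} := by
            ext x
            simp only [hV, Set.mem_setOf_eq]
          rw [h7]
          exact ShotNoiseAux.aux_null hg hgac hA hA0 hw
      simp only [hzero]
      exact lintegral_zero
    exact measure_mono_null hsub
      (measure_union_null hPU (measure_union_null (hTpos n)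
        (measure_union_null (hΔ0 n) hconvnull)))
  -- the chain of events
  set Ev : ℕ → Set Ω :=
    fun n => {ω | (∀ i < n, g (jumpTime E (i + 1) ω) = 0) ∧ R n ω ∈ A} with hEv
  have hEv0 : I ⁻¹' A ⊆ Ev 0 := by
    intro ω hω
    refine ⟨fun i hi => absurd hi (Nat.not_lt_zero i), ?_⟩
    simp only [hRdef, Finset.range_zero, Finset.sum_empty, sub_zero]
    exact hω
  have hstep : ∀ n, P (Ev n) ≤ P (Ev (n + 1)) := by
    intro n
    have hsub : Ev n ⊆ Ev (n + 1) ∪ {ω | g (jumpTime E (n + 1) ω) ≠ 0 ∧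
        Δ n ω * g (jumpTime E (n + 1) ω) + R (n + 1) ω ∈ A} := by
      rintro ω ⟨hall, hRA⟩
      by_cases hg0 : g (jumpTime E (n + 1) ω) = 0
      · left
        refine ⟨fun i hi => ?_, ?_⟩
        · rcases Nat.lt_succ_iff_lt_or_eq.mp hi with h | h
          · exact hall i h
          · rw [h]
            exact hg0
        · have hRR : R (n + 1) ω = R n ω := by
            rw [hRstep, hg0, mul_zero, sub_zero]
          rw [hRR]
          exact hRA
      · right
        refine ⟨hg0, ?_⟩
        have hRR : Δ n ω * g (jumpTime E (n + 1) ω) + R (n + 1) ω = R n ω := by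
          rw [hRstep]
          ring
        rw [hRR]
        exact hRA
    calc P (Ev n) ≤ P (Ev (n + 1)) + P {ω | g (jumpTime E (n + 1) ω) ≠ 0 ∧
        Δ n ω * g (jumpTime E (n + 1) ω) + R (n + 1) ω ∈ A} :=
          (measure_mono hsub).trans (measure_union_le _ _)
    _ = P (Ev (n + 1)) := by rw [keyG n, add_zero]
  have hmain : ∀ n, P (I ⁻¹' A) ≤ P (Ev n) := by
    intro n
    induction n with
    | zero => exact measure_mono hEv0
    | succ m ih => exact ih.trans (hstep m)
  -- the decreasing events
  set F : ℕ → Set Ω := fun n => {ω | ∀ i < n, g (jumpTime E (i + 1) ω) = 0} with hF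
  have hFm : ∀ n, MeasurableSet (F n) := by
    intro n
    have heq : F n = ⋂ i ∈ Finset.range n, (fun ω => g (jumpTime E (i + 1) ω)) ⁻¹' {0} := by
      ext ω
      simp [hF, Finset.mem_range]
    rw [heq]
    exact MeasurableSet.biInter (Set.to_countable _)
      (fun i _ => (hg.comp (hT (i + 1))) (measurableSet_singleton 0))
  have hFanti : Antitone F := fun a b hab ω hω i hi => hω i (lt_of_lt_of_le hi hab)
  have hEvFinf : ∀ n, P (Ev n ∩ ⋂ m, F m) = 0 := by
    intro n
    apply measure_mono_null ?_ hconvnull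
    rintro ω ⟨⟨-, hRA⟩, hinf⟩
    simp only [Set.mem_setOf_eq]
    intro htend
    have hzero : ∀ i, g (jumpTime E (i + 1) ω) = 0 := by
      intro i
      exact (Set.mem_iInter.mp hinf (i + 1)) i (Nat.lt_succ_self i)
    have hsumzero : ∀ m, ∑ i ∈ Finset.range m, Δ i ω * g (jumpTime E (i + 1) ω) = 0 :=
      fun m => Finset.sum_eq_zero (fun i _ => by rw [hzero i, mul_zero])
    have hI0 : I ω = 0 := by
      have h2 : Tendsto (fun m : ℕ => (0 : ℝ)) atTop (nhds (I ω)) := by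
        have := htend
        simp only [hsumzero] at this
        exact this
      exact (tendsto_nhds_unique h2 tendsto_const_nhds)
    have hRn : R n ω = 0 := by
      simp [hRdef, hsumzero, hI0]
    rw [hRn] at hRA
    exact h0A hRA
  have hbound : ∀ n, P (I ⁻¹' A) ≤ P (F n) - P (⋂ m, F m) := by
    intro n
    have h1 : P (Ev n) ≤ P ((F n \ ⋂ m, F m) ∪ (Ev n ∩ ⋂ m, F m)) := by
      apply measure_mono
      intro ω hω
      by_cases hmem : ω ∈ ⋂ m, F m
      · exact Or.inr ⟨hω, hmem⟩
      · exact Or.inl ⟨hω.1, hmem⟩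
    have h2 : P (Ev n) ≤ P (F n \ ⋂ m, F m) := by
      refine (h1.trans (measure_union_le _ _)).trans ?_
      rw [hEvFinf n, add_zero]
    have h3 : P (F n \ ⋂ m, F m) = P (F n) - P (⋂ m, F m) :=
      measure_diff (Set.iInter_subset F n)
        (MeasurableSet.iInter hFm).nullMeasurableSet (measure_ne_top P _)
    exact (hmain n).trans (h2.trans_eq h3)
  have htendF : Tendsto (fun n => P (F n)) atTop (nhds (P (⋂ n, F n))) :=
    tendsto_measure_iInter_atTop (fun n => (hFm n).nullMeasurableSet) hFanti
      ⟨0, measure_ne_top P _⟩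
  have htend0 : Tendsto (fun n => P (F n) - P (⋂ m, F m)) atTop (nhds 0) := by
    have h4 := ENNReal.Tendsto.sub htendF tendsto_const_nhds
      (Or.inr (measure_ne_top P (⋂ m, F m)))
    simpa using h4
  exact le_antisymm (ge_of_tendsto' htend0 hbound) (zero_le)
end

section
/- Let f : ℝ₊ → ℝ be absolutely continuous on [α, β] with f′(x) ≠ 0 for almost all x ∈ [α, β]. Then the pushforward λ_{[α,β]} f^{−1} is absolutely continuous with respect to Lebesgue measure on ℝ. -/
open MeasureTheory Filter intervalIntegral
open scoped ENNReal NNReal Topology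

lemma aux_primitive_nonneg (c : ℝ) {φ : ℝ → ℝ} (hφ : Integrable φ volume) (hm : Measurable φ)
    (h0 : ∀ x, 0 ≤ φ x) :
    ∀ᵐ x, HasDerivAt (fun y => ∫ t in c..y, φ t) (φ x) x := by
  have hii : ∀ p q : ℝ, IntervalIntegrable φ volume p q := fun p q => hφ.intervalIntegrable
  have hsub : ∀ p q : ℝ, (∫ t in c..q, φ t) - ∫ t in c..p, φ t = ∫ t in p..q, φ t := by
    intro p q
    exact intervalIntegral.integral_interval_sub_left (hii c q) (hii c p)
  set F : StieltjesFunction ℝ :=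
    { toFun := fun y => ∫ t in c..y, φ t
      mono' := by
        intro p q hpq
        have h1 : (0:ℝ) ≤ ∫ t in p..q, φ t :=
          intervalIntegral.integral_nonneg hpq fun t _ => h0 t
        have := hsub p q
        linarith
      right_continuous' := fun x =>
        ((intervalIntegral.continuous_primitive hii c).continuousAt).continuousWithinAt } with hF
  have key : F.measure = volume.withDensity fun x => ENNReal.ofReal (φ x) := by
    refine Measure.ext_of_Ioc _ _ fun p q hpq => ?_
    rw [F.measure_Ioc, withDensity_apply _ measurableSet_Ioc]
    have : F q - F p = ∫ t in Set.Ioc p q, φ t := by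
      have := hsub p q
      simp only [hF] at this ⊢
      rw [this, intervalIntegral.integral_of_le hpq.le]
    rw [this, ofReal_integral_eq_lintegral_ofReal (hφ.integrableOn)
      (Filter.Eventually.of_forall fun t => h0 t)]
  have hrn : F.measure.rnDeriv volume =ᵐ[volume] fun x => ENNReal.ofReal (φ x) := by
    rw [key]
    exact Measure.rnDeriv_withDensity volume (hm.ennreal_ofReal)
  filter_upwards [F.ae_hasDerivAt, hrn] with x hx h2
  rw [h2] at hx
  simpa [ENNReal.toReal_ofReal (h0 x)] using hx

lemma aux_primitive (c : ℝ) {g : ℝ → ℝ} (hg : Integrable g volume) (hm : Measurable g) :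
    ∀ᵐ x, HasDerivAt (fun y => ∫ t in c..y, g t) (g x) x := by
  set gp : ℝ → ℝ := fun x => (|g x| + g x) / 2 with hgp
  set gm : ℝ → ℝ := fun x => (|g x| - g x) / 2 with hgm
  have hgpint : Integrable gp volume := (hg.abs.add hg).div_const 2
  have hgmint : Integrable gm volume := (hg.abs.sub hg).div_const 2
  have hgpm : Measurable gp := (hm.abs.add hm).div_const 2
  have hgmm : Measurable gm := (hm.abs.sub hm).div_const 2
  have hgp0 : ∀ x, 0 ≤ gp x := fun x => by
    have := neg_abs_le (g x); simp only [hgp]; linarith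
  have hgm0 : ∀ x, 0 ≤ gm x := fun x => by
    have := le_abs_self (g x); simp only [hgm]; linarith
  filter_upwards [aux_primitive_nonneg c hgpint hgpm hgp0,
    aux_primitive_nonneg c hgmint hgmm hgm0] with x h1 h2
  have hsplit : ∀ y, (∫ t in c..y, g t) = (∫ t in c..y, gp t) - ∫ t in c..y, gm t := by
    intro y
    rw [← intervalIntegral.integral_sub hgpint.intervalIntegrable hgmint.intervalIntegrable]
    refine intervalIntegral.integral_congr fun t _ => ?_
    simp only [hgp, hgm]; ring
  have : HasDerivAt (fun y => (∫ t in c..y, gp t) - ∫ t in c..y, gm t) (gp x - gm x) x :=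
    h1.sub h2
  have hx : gp x - gm x = g x := by simp only [hgp, hgm]; ring
  rw [hx] at this
  exact this.congr_of_eventuallyEq (Filter.Eventually.of_forall fun y => hsplit y)


/-- If `f` is absolutely continuous on `[α, β]` (i.e. it is the integral of its integrable
derivative `f'`) with `f'(x) ≠ 0` for almost all `x ∈ [α, β]`, then the pushforward
`λ_{[α,β]} f⁻¹` is absolutely continuous with respect to Lebesgue measure on `ℝ`. -/
theorem map_absolutelyContinuous_of_deriv_ne_zero (a b : ℝ) (hab : a ≤ b) (ha : 0 ≤ a)
    (f : ℝ → ℝ) (f' : ℝ → ℝ)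
    (hf'int : IntegrableOn f' (Set.Icc a b) volume)
    (hfAC : ∀ x ∈ Set.Icc a b, f x = f a + ∫ t in a..x, f' t)
    (hf'ne : ∀ᵐ x ∂volume.restrict (Set.Icc a b), f' x ≠ 0) :
    (volume.restrict (Set.Icc a b)).map f ≪ (volume : Measure ℝ) := by
  classical
  -- measurable representative of the indicator extension of `f'`
  set E : ℝ → ℝ := (Set.Icc a b).indicator f' with hEdef
  have hE : Integrable E volume := (integrable_indicator_iff measurableSet_Icc).2 hf'int
  set g : ℝ → ℝ := hE.aemeasurable.mk _ with hgdef
  have hgm : Measurable g := hE.aemeasurable.measurable_mk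
  have hgae : E =ᵐ[volume] g := hE.aemeasurable.ae_eq_mk
  have hgint : Integrable g volume := hE.congr hgae
  set G : ℝ → ℝ := fun y => ∫ t in a..y, g t with hGdef
  have hGcont : Continuous G :=
    intervalIntegral.continuous_primitive (fun _ _ => hgint.intervalIntegrable) a
  -- FTC a.e.
  have H : ∀ᵐ x, HasDerivAt G (g x) x := aux_primitive a hgint hgm
  -- relation between f and G on Icc
  have hfg : ∀ x ∈ Set.Icc a b, f x = f a + G x := by
    intro x hx
    have h1 : (∫ t in a..x, f' t) = ∫ t in a..x, E t := by
      refine intervalIntegral.integral_congr fun t ht => ?_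
      have : t ∈ Set.Icc a b := by
        rcases Set.uIcc_subset_Icc (Set.left_mem_Icc.2 hab) hx ht with ht'
        exact ht'
      simp [hEdef, Set.indicator_of_mem this]
    have h2 : (∫ t in a..x, E t) = ∫ t in a..x, g t :=
      intervalIntegral.integral_congr_ae (by
        filter_upwards [hgae] with t ht _ using ht)
    rw [hfAC x hx, h1, h2]
  -- the good set
  set T : Set ℝ := {x | x ∈ Set.Ioo a b ∧ HasDerivAt f (g x) x ∧ g x ≠ 0} with hTdef
  have hT : ∀ᵐ x ∂volume.restrict (Set.Icc a b), x ∈ Set.Ioo a b → x ∈ T := by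
    filter_upwards [ae_restrict_of_ae H, ae_restrict_of_ae hgae, hf'ne,
      ae_restrict_mem measurableSet_Icc] with x hH hge hne hmem hIoo
    have hgx : g x = f' x := by
      rw [← hge]; simp [hEdef, Set.indicator_of_mem hmem]
    refine ⟨hIoo, ?_, by rw [hgx]; exact hne⟩
    have hnb : Set.Icc a b ∈ 𝓝 x := Icc_mem_nhds hIoo.1 hIoo.2
    have heq : f =ᶠ[𝓝 x] fun y => f a + G y :=
      Filter.eventually_of_mem hnb fun y hy => hfg y hy
    exact (hH.const_add (f a)).congr_of_eventuallyEq heq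
  have hIoo_ae : ∀ᵐ x ∂volume.restrict (Set.Icc a b), x ∈ Set.Ioo a b := by
    have hsub : Set.Icc a b \ Set.Ioo a b ⊆ {a, b} := by
      intro x hx
      rcases hx with ⟨⟨h1, h2⟩, h3⟩
      simp only [Set.mem_Ioo, not_and_or, not_lt] at h3
      rcases h3 with h3 | h3
      · exact Or.inl (le_antisymm h3 h1)
      · exact Or.inr (le_antisymm h2 h3)
    have : volume (Set.Icc a b \ Set.Ioo a b) = 0 :=
      measure_mono_null hsub ((Set.toFinite ({a, b} : Set ℝ)).measure_zero _)
    rw [ae_restrict_iff' measurableSet_Icc]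
    refine ae_iff.2 (measure_mono_null ?_ this)
    intro x hx
    simp only [Set.mem_setOf_eq, not_forall] at hx
    obtain ⟨h1, h2⟩ := hx
    exact ⟨h1, h2⟩
  have hTae : ∀ᵐ x ∂volume.restrict (Set.Icc a b), x ∈ T := by
    filter_upwards [hT, hIoo_ae] with x h1 h2 using h1 h2
  -- the measure-zero expansion constant machinery
  have hr : ∀ A : ℝ →L[ℝ] ℝ, ∃ δ : ℝ≥0, 0 < δ ∧ (A.det ≠ 0 →
      ∀ (t : Set ℝ) (φ : ℝ → ℝ), ApproximatesLinearOn φ A t δ →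
        ENNReal.ofReal (|A.det| / 2) * volume t ≤ volume (φ '' t)) := by
    intro A
    by_cases hA : A.det = 0
    · exact ⟨1, one_pos, fun h => absurd hA h⟩
    · have habs : 0 < |A.det| := abs_pos.2 hA
      have hmlt : ((|A.det| / 2).toNNReal : ℝ≥0∞) < ENNReal.ofReal |A.det| := by
        rw [show ((|A.det| / 2).toNNReal : ℝ≥0∞) = ENNReal.ofReal (|A.det| / 2) from rfl]
        exact (ENNReal.ofReal_lt_ofReal_iff habs).2 (by linarith)
      have h := MeasureTheory.mul_le_addHaar_image_of_lt_det (volume : Measure ℝ) A hmlt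
      obtain ⟨δ, hδ1, hδ2⟩ := (h.and self_mem_nhdsWithin).exists
      refine ⟨δ, hδ2, fun _ t φ hφ => ?_⟩
      have := hδ1 t φ hφ
      rwa [show ((|A.det| / 2).toNNReal : ℝ≥0∞) = ENNReal.ofReal (|A.det| / 2) from rfl] at this
  choose r hr0 hrP using hr
  -- absolute continuity
  refine Measure.AbsolutelyContinuous.mk fun s hs hsnull => ?_
  have hfae : AEMeasurable f (volume.restrict (Set.Icc a b)) := by
    refine AEMeasurable.congr (f := fun y => f a + G y) ((measurable_const.add hGcont.measurable)).aemeasurable ?_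
    filter_upwards [ae_restrict_mem measurableSet_Icc] with x hx using (hfg x hx).symm
  rw [Measure.map_apply_of_aemeasurable hfae hs, Measure.restrict_apply' measurableSet_Icc]
  -- split off the bad set
  have hbad : volume (Tᶜ ∩ Set.Icc a b) = 0 := by
    have := hTae
    rw [ae_iff] at this
    rw [Measure.restrict_apply' measurableSet_Icc] at this
    exact this
  have hsplit : f ⁻¹' s ∩ Set.Icc a b ⊆ (f ⁻¹' s ∩ T) ∪ (Tᶜ ∩ Set.Icc a b) := by
    intro x hx
    by_cases hxT : x ∈ T
    · exact Or.inl ⟨hx.1, hxT⟩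
    · exact Or.inr ⟨hxT, hx.2⟩
  refine measure_mono_null hsplit (measure_union_null ?_ hbad)
  -- the key covering argument on σ
  set σ : Set ℝ := f ⁻¹' s ∩ T with hσdef
  rcases Set.eq_empty_or_nonempty σ with hσe | hσne
  · simp [hσe]
  have hder : ∀ x ∈ σ, HasFDerivWithinAt f ((1 : ℝ →L[ℝ] ℝ).smulRight (g x)) σ x :=
    fun x hx => hx.2.2.1.hasFDerivAt.hasFDerivWithinAt
  obtain ⟨t, A, t_disj, t_meas, t_cover, t_approx, hAspec⟩ :=
    exists_partition_approximatesLinearOn_of_hasFDerivWithinAt f σ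
      (fun x => (1 : ℝ →L[ℝ] ℝ).smulRight (g x)) hder r (fun A => (hr0 A).ne')
  have hpiece : ∀ n, volume (σ ∩ t n) = 0 := by
    intro n
    obtain ⟨y, hyσ, hAy⟩ := hAspec hσne n
    have hdet : (A n).det ≠ 0 := by
      rw [hAy, ContinuousLinearMap.det_smulRight, ContinuousLinearMap.one_apply, one_mul]
      exact hyσ.2.2.2
    have h1 := hrP (A n) hdet (σ ∩ t n) f (t_approx n)
    have h2 : volume (f '' (σ ∩ t n)) = 0 := by
      refine measure_mono_null ?_ hsnull
      rintro z ⟨x, hx, rfl⟩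
      exact hx.1.1
    rw [h2, nonpos_iff_eq_zero, mul_eq_zero] at h1
    rcases h1 with h1 | h1
    · exfalso
      have : 0 < |(A n).det| / 2 := by
        have := abs_pos.2 hdet; linarith
      rw [ENNReal.ofReal_eq_zero] at h1; linarith
    · exact h1
  have : volume σ ≤ ∑' n, volume (σ ∩ t n) := by
    refine le_trans (measure_mono ?_) (measure_iUnion_le _)
    intro x hx
    rcases Set.mem_iUnion.1 (t_cover hx) with ⟨n, hn⟩
    exact Set.mem_iUnion.2 ⟨n, hx, hn⟩
  have h0 : ∑' n, volume (σ ∩ t n) = 0 := by simp [hpiece]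
  rw [h0, le_zero_iff] at this
  exact this
end
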